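/- arXiv:1401.6509 — 14 statements merged into one kernel-verified Lean document; each statement's English description precedes it below -/
import Mathlib

section
/- Let A, B be closed subsets of a Euclidean space, L := aff(A ∪ B), and let (xₙ) be a Douglas–Rachford sequence, i.e., x_{n+1} ∈ T(xₙ) for all n, where T = (1/2)(Id + R_B R_A). Set yₙ := P_L xₙ. Then (yₙ) is also a Douglas–Rachford sequence (y_{n+1} ∈ T(yₙ)) and xₙ − yₙ = x₀ − y₀ for all n ∈ ℕ. -/
open Metric Filter
open scoped Topology

variable {X : Type*} [NormedAddCommGroup X] [InnerProductSpace ℝ X] [FiniteDimensional ℝ X]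

/-- Set-valued metric projection onto `C`. -/
def projSet (C : Set X) (x : X) : Set X := {a | a ∈ C ∧ ∀ c ∈ C, ‖x - a‖ ≤ ‖x - c‖}

/-- Set-valued reflector `R_C = 2 P_C - Id`. -/
def reflSet (C : Set X) (x : X) : Set X := {z | ∃ a ∈ projSet C x, z = (2:ℝ) • a - x}

/-- Set-valued Douglas–Rachford operator `T(x) = {P_B(2a-x)+x-a : a ∈ P_A x}`. -/
def DRop (A B : Set X) (x : X) : Set X :=
  {y | ∃ a ∈ projSet A x, ∃ b ∈ projSet B ((2:ℝ) • a - x), y = b + x - a}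

/-- Proximal normal cone `N^P_C(x) = cone (P_C⁻¹ x - x)`. -/
def proxNormalCone (C : Set X) (x : X) : Set X :=
  {u | ∃ t : ℝ, 0 ≤ t ∧ ∃ z : X, x ∈ projSet C z ∧ u = t • (z - x)}

/-- Mordukhovich (limiting) normal cone. -/
def limNormalCone (C : Set X) (w : X) : Set X :=
  {u | ∃ xs us : ℕ → X, (∀ n, xs n ∈ C) ∧ (∀ n, us n ∈ proxNormalCone C (xs n)) ∧
      Tendsto xs atTop (𝓝 w) ∧ Tendsto us atTop (𝓝 u)}

/-- `(ε,δ)`-regularity of `C` at `w`. -/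
def regAt (C : Set X) (w : X) (ε δ : ℝ) : Prop :=
  ∀ x ∈ C ∩ closedBall w δ, ∀ z ∈ C ∩ closedBall w δ, ∀ u ∈ proxNormalCone C x,
    (inner ℝ u (z - x) : ℝ) ≤ ε * ‖u‖ * ‖z - x‖

/-- Superregularity of `C` at `w`. -/
def superregAt (C : Set X) (w : X) : Prop := ∀ ε > 0, ∃ δ > 0, regAt C w ε δ

/-- The quantity `θ̄(N₁,N₂) = sup {⟨u,v⟩ : u ∈ N₁ ∩ 𝔹, v ∈ (-N₂) ∩ 𝔹}`. -/
noncomputable def thetaBar (N₁ N₂ : Set X) : ℝ :=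
  sSup {r : ℝ | ∃ u ∈ N₁, ∃ v ∈ -N₂, ‖u‖ ≤ 1 ∧ ‖v‖ ≤ 1 ∧ r = (inner ℝ u v : ℝ)}

/-- If `q` is a metric projection of `x` onto an affine subspace `L`, then `x - q`
is orthogonal to all differences of points of `L`. -/
lemma proj_orth_aux (L : AffineSubspace ℝ X) (x q : X)
    (hq : q ∈ projSet (L : Set X) x) (p p' : X) (hp : p ∈ L) (hp' : p' ∈ L) :
    (inner ℝ (x - q) (p - p') : ℝ) = 0 := by
  obtain ⟨hqL, hmin⟩ := hq
  have single : ∀ z, z ∈ L → (inner ℝ (x - q) (z - q) : ℝ) = 0 := by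
    intro z hz
    set c : ℝ := inner ℝ (x - q) (z - q) with hc
    set B : ℝ := ‖z - q‖ ^ 2 with hBdef
    have key : ∀ t : ℝ, 0 ≤ t ^ 2 * B - 2 * t * c := by
      intro t
      have hmem : q + t • (z - q) ∈ L := by
        have := L.smul_vsub_vadd_mem t hz hqL hqL
        simpa [vsub_eq_sub, vadd_eq_add, add_comm] using this
      have h1 : ‖x - q‖ ≤ ‖x - (q + t • (z - q))‖ := hmin _ hmem
      have h2 : ‖x - (q + t • (z - q))‖ = ‖(x - q) - t • (z - q)‖ := by
        congr 1; abel
      have h3 : ‖(x - q) - t • (z - q)‖ ^ 2 =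
          ‖x - q‖ ^ 2 - 2 * (inner ℝ (x - q) (t • (z - q)) : ℝ) + ‖t • (z - q)‖ ^ 2 := by
        rw [← norm_sub_sq_real]
      have h4 : (inner ℝ (x - q) (t • (z - q)) : ℝ) = t * c := real_inner_smul_right _ _ _
      have h5 : ‖t • (z - q)‖ ^ 2 = t ^ 2 * B := by
        rw [norm_smul, mul_pow, hBdef]; simp [sq_abs]
      have h6 : ‖x - q‖ ^ 2 ≤ ‖x - (q + t • (z - q))‖ ^ 2 := by
        have := norm_nonneg (x - q); nlinarith
      rw [h2, h3, h4, h5] at h6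
      linarith
    by_cases hB : B = 0
    · have hz0 : z - q = 0 := by
        have : ‖z - q‖ = 0 := by
          have := sq_eq_zero_iff.mp hB; simpa using this
        simpa using this
      simp [hc, hz0]
    · have hBpos : 0 < B := lt_of_le_of_ne (by positivity) (Ne.symm hB)
      have h := key (c / B)
      have h2 : (c / B) ^ 2 * B = c ^ 2 / B := by field_simp
      have h3 : 2 * (c / B) * c = 2 * (c ^ 2 / B) := by field_simp
      rw [h2, h3] at h
      have : c ^ 2 / B ≤ 0 := by linarith
      have hc2 : c ^ 2 ≤ 0 := by
        by_contra hcon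
        push_neg at hcon
        have : 0 < c ^ 2 / B := div_pos hcon hBpos
        linarith
      nlinarith [sq_nonneg c]
  have e : p - p' = (p - q) - (p' - q) := by abel
  rw [e, inner_sub_right, single p hp, single p' hp', sub_zero]

/-- Pythagoras: if `x - q` is orthogonal to differences in `L` and `q, c ∈ L`, then
`‖x - c‖² = ‖x - q‖² + ‖q - c‖²`. -/
lemma pyth_aux (L : AffineSubspace ℝ X) (x q : X) (hqL : q ∈ L)
    (horth : ∀ p ∈ L, ∀ p' ∈ L, (inner ℝ (x - q) (p - p') : ℝ) = 0)
    (c : X) (hc : c ∈ L) : ‖x - c‖ ^ 2 = ‖x - q‖ ^ 2 + ‖q - c‖ ^ 2 := by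
  have e : x - c = (x - q) + (q - c) := by abel
  rw [e, norm_add_sq_real, horth q hqL c hc]
  ring

/-- If `x - q` is orthogonal to differences in `L`, with `q ∈ L` and `C ⊆ L`, then
projections onto `C` from `x` and from `q` agree. -/
lemma projSet_eq_of_orth (C : Set X) (L : AffineSubspace ℝ X) (hCL : C ⊆ (L : Set X))
    (x q : X) (hqL : q ∈ L)
    (horth : ∀ p ∈ L, ∀ p' ∈ L, (inner ℝ (x - q) (p - p') : ℝ) = 0) :
    projSet C x = projSet C q := by
  have key : ∀ c ∈ C, ‖x - c‖ ^ 2 = ‖x - q‖ ^ 2 + ‖q - c‖ ^ 2 := fun c hc =>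
    pyth_aux L x q hqL horth c (hCL hc)
  ext u
  constructor
  · rintro ⟨huC, hmin⟩
    refine ⟨huC, fun c hc => ?_⟩
    have h1 := hmin c hc
    have h2 := key u huC
    have h3 := key c hc
    nlinarith [norm_nonneg (x - u), norm_nonneg (x - c), norm_nonneg (q - u), norm_nonneg (q - c)]
  · rintro ⟨huC, hmin⟩
    refine ⟨huC, fun c hc => ?_⟩
    have h1 := hmin c hc
    have h2 := key u huC
    have h3 := key c hc
    nlinarith [norm_nonneg (x - u), norm_nonneg (x - c), norm_nonneg (q - u), norm_nonneg (q - c)]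

/-- Uniqueness: if `q ∈ L` and `x - q` is orthogonal to differences in `L`, then `q` is
the metric projection of `x` onto `L`. -/
lemma projL_eq_of_orth (L : AffineSubspace ℝ X) (PL : X → X)
    (hPL : ∀ x, projSet (L : Set X) x = {PL x}) (x q : X) (hqL : q ∈ L)
    (horth : ∀ p ∈ L, ∀ p' ∈ L, (inner ℝ (x - q) (p - p') : ℝ) = 0) : PL x = q := by
  have hmem : q ∈ projSet (L : Set X) x := by
    refine ⟨hqL, fun c hc => ?_⟩
    have h := pyth_aux L x q hqL horth c hc
    nlinarith [norm_nonneg (x - q), norm_nonneg (x - c), sq_nonneg ‖q - c‖]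
  rw [hPL x] at hmem
  exact (Set.mem_singleton_iff.mp hmem).symm

theorem DR_affine_reduction_sequence
    (A B : Set X) (hA : IsClosed A) (hB : IsClosed B)
    (hAne : A.Nonempty) (hBne : B.Nonempty)
    (PL : X → X)
    (hPL : ∀ x, projSet ((affineSpan ℝ (A ∪ B) : AffineSubspace ℝ X) : Set X) x = {PL x})
    (xs : ℕ → X) (hxs : ∀ n, xs (n + 1) ∈ DRop A B (xs n)) :
    (∀ n, PL (xs (n + 1)) ∈ DRop A B (PL (xs n))) ∧
      ∀ n, xs n - PL (xs n) = xs 0 - PL (xs 0) := by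
  set L : AffineSubspace ℝ X := affineSpan ℝ (A ∪ B) with hLdef
  have hAL : A ⊆ (L : Set X) := Set.subset_union_left.trans (subset_affineSpan ℝ _)
  have hBL : B ⊆ (L : Set X) := Set.subset_union_right.trans (subset_affineSpan ℝ _)
  have hPLproj : ∀ x, PL x ∈ projSet (L : Set X) x := by
    intro x; rw [hPL x]; rfl
  have hPLmem : ∀ x, PL x ∈ L := fun x => (hPLproj x).1
  have horthx : ∀ x, ∀ p ∈ L, ∀ p' ∈ L, (inner ℝ (x - PL x) (p - p') : ℝ) = 0 :=
    fun x p hp p' hp' => proj_orth_aux L x (PL x) (hPLproj x) p p' hp hp'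
  have step : ∀ n, PL (xs (n + 1)) ∈ DRop A B (PL (xs n)) ∧
      xs (n + 1) - PL (xs (n + 1)) = xs n - PL (xs n) := by
    intro n
    obtain ⟨a, ha, b, hb, hx1⟩ := hxs n
    have haL : a ∈ L := hAL ha.1
    have hbL : b ∈ L := hBL hb.1
    -- a is also a projection of PL (xs n) onto A
    have hprojA : projSet A (xs n) = projSet A (PL (xs n)) :=
      projSet_eq_of_orth A L hAL (xs n) (PL (xs n)) (hPLmem _) (horthx (xs n))
    have ha' : a ∈ projSet A (PL (xs n)) := hprojA ▸ ha
    -- the reflected point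
    have hqL : (2 : ℝ) • a - PL (xs n) ∈ L := by
      have hmem := AffineSubspace.vadd_mem_of_mem_direction
        (AffineSubspace.vsub_mem_direction haL (hPLmem (xs n))) haL
      have e : (2 : ℝ) • a - PL (xs n) = (a - PL (xs n)) + a := by
        rw [two_smul]; abel
      rw [e]; simpa [vsub_eq_sub, vadd_eq_add] using hmem
    have horthr : ∀ p ∈ L, ∀ p' ∈ L,
        (inner ℝ (((2 : ℝ) • a - xs n) - ((2 : ℝ) • a - PL (xs n))) (p - p') : ℝ) = 0 := by
      intro p hp p' hp'
      have e : ((2 : ℝ) • a - xs n) - ((2 : ℝ) • a - PL (xs n)) = -(xs n - PL (xs n)) := by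
        abel
      rw [e, inner_neg_left, horthx (xs n) p hp p' hp', neg_zero]
    have hprojB : projSet B ((2 : ℝ) • a - xs n) = projSet B ((2 : ℝ) • a - PL (xs n)) :=
      projSet_eq_of_orth B L hBL _ _ hqL horthr
    have hb' : b ∈ projSet B ((2 : ℝ) • a - PL (xs n)) := hprojB ▸ hb
    -- compute PL (xs (n+1))
    have hq'L : b + PL (xs n) - a ∈ L := by
      have hmem := AffineSubspace.vadd_mem_of_mem_direction
        (AffineSubspace.vsub_mem_direction hbL haL) (hPLmem (xs n))
      have e : b + PL (xs n) - a = (b - a) + PL (xs n) := by abel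
      rw [e]; simpa [vsub_eq_sub, vadd_eq_add] using hmem
    have horth' : ∀ p ∈ L, ∀ p' ∈ L,
        (inner ℝ (xs (n + 1) - (b + PL (xs n) - a)) (p - p') : ℝ) = 0 := by
      intro p hp p' hp'
      have e : xs (n + 1) - (b + PL (xs n) - a) = xs n - PL (xs n) := by
        rw [hx1]; abel
      rw [e]; exact horthx (xs n) p hp p' hp'
    have hPLx1 : PL (xs (n + 1)) = b + PL (xs n) - a :=
      projL_eq_of_orth L PL hPL _ _ hq'L horth'
    constructor
    · exact ⟨a, ha', b, hb', hPLx1⟩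
    · rw [hPLx1, hx1]; abel
  refine ⟨fun n => (step n).1, fun n => ?_⟩
  induction n with
  | zero => rfl
  | succ k ih => rw [(step k).2, ih]
end

section
/- Let A, B be closed subsets of a Euclidean space, L := aff(A ∪ B), and let (xₙ) be a Douglas–Rachford sequence with shadows yₙ := P_L xₙ. If (yₙ) converges to a point ȳ ∈ A ∩ B, then (xₙ) converges to x̄ := ȳ + (x₀ − y₀), and moreover P_A x̄ = P_B x̄ = P_L x̄ = {ȳ}; in particular the projections of x̄ onto A and onto B are singletons equal to ȳ. -/
open Metric Filter
open scoped Topology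

variable {X : Type*} [NormedAddCommGroup X] [InnerProductSpace ℝ X] [FiniteDimensional ℝ X]

theorem DR_affine_reduction_convergence
    (A B : Set X) (hA : IsClosed A) (hB : IsClosed B)
    (hAne : A.Nonempty) (hBne : B.Nonempty)
    (PL : X → X)
    (hPL : ∀ x, projSet ((affineSpan ℝ (A ∪ B) : AffineSubspace ℝ X) : Set X) x = {PL x})
    (xs : ℕ → X) (hxs : ∀ n, xs (n + 1) ∈ DRop A B (xs n))
    (ybar : X) (hybar : ybar ∈ A ∩ B)
    (hconv : Tendsto (fun n => PL (xs n)) atTop (𝓝 ybar)) :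
    Tendsto xs atTop (𝓝 (ybar + (xs 0 - PL (xs 0)))) ∧
      projSet A (ybar + (xs 0 - PL (xs 0))) = {ybar} ∧
      projSet B (ybar + (xs 0 - PL (xs 0))) = {ybar} ∧
      PL (ybar + (xs 0 - PL (xs 0))) = ybar := by
  set L : AffineSubspace ℝ X := affineSpan ℝ (A ∪ B) with hLdef
  have hmemPL : ∀ x, PL x ∈ projSet (L : Set X) x := by
    intro x
    rw [hPL x]
    exact Set.mem_singleton _
  have hPLmem : ∀ x, PL x ∈ (L : Set X) := fun x => (hmemPL x).1
  have hPLmin : ∀ x, ∀ c ∈ (L : Set X), ‖x - PL x‖ ≤ ‖x - c‖ := fun x => (hmemPL x).2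
  have huniq : ∀ x z, z ∈ (L : Set X) → (∀ c ∈ (L : Set X), ‖x - z‖ ≤ ‖x - c‖) →
      z = PL x := by
    intro x z hz hmin
    have hzmem : z ∈ projSet (L : Set X) x := ⟨hz, hmin⟩
    rw [hPL x] at hzmem
    exact hzmem
  have hAL : A ⊆ (L : Set X) := Set.Subset.trans Set.subset_union_left
    (subset_affineSpan ℝ (A ∪ B))
  have hBL : B ⊆ (L : Set X) := Set.Subset.trans Set.subset_union_right
    (subset_affineSpan ℝ (A ∪ B))
  -- translation invariance: PL (x + v) = PL x + v for v in the direction of L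
  have htrans : ∀ x v, v ∈ L.direction → PL (x + v) = PL x + v := by
    intro x v hv
    symm
    apply huniq
    · have := AffineSubspace.vadd_mem_of_mem_direction hv (hPLmem x)
      simpa [vadd_eq_add, add_comm] using this
    · intro c hc
      have hc' : c - v ∈ (L : Set X) := by
        have := AffineSubspace.vadd_mem_of_mem_direction (neg_mem hv) hc
        simpa [vadd_eq_add, sub_eq_neg_add] using this
      have h1 : ‖x + v - (PL x + v)‖ = ‖x - PL x‖ := by
        congr 1; abel
      have h2 : ‖x - (c - v)‖ = ‖x + v - c‖ := by
        congr 1; abel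
      rw [h1, ← h2]
      exact hPLmin x (c - v) hc'
  -- the orthogonal displacement is constant along the DR sequence
  have hstep : ∀ n, xs (n + 1) - PL (xs (n + 1)) = xs n - PL (xs n) := by
    intro n
    obtain ⟨a, ha, b, hb, hx⟩ := hxs n
    have hv : b - a ∈ L.direction :=
      AffineSubspace.vsub_mem_direction (hBL hb.1) (hAL ha.1)
    have hx' : xs (n + 1) = xs n + (b - a) := by rw [hx]; abel
    rw [hx', htrans _ _ hv]
    abel
  have hconst : ∀ n, xs n - PL (xs n) = xs 0 - PL (xs 0) := by
    intro n
    induction n with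
    | zero => rfl
    | succ k ih => rw [hstep k, ih]
  have hxn : ∀ n, xs n = PL (xs n) + (xs 0 - PL (xs 0)) := by
    intro n
    rw [← hconst n]; abel
  -- convergence of xs
  have hconv' : Tendsto xs atTop (𝓝 (ybar + (xs 0 - PL (xs 0)))) := by
    have h := hconv.add (tendsto_const_nhds
      (x := xs 0 - PL (xs 0)) (f := atTop (α := ℕ)))
    exact h.congr fun n => (hxn n).symm
  -- PL (ybar + e) = ybar
  have hyL : ybar ∈ (L : Set X) := hAL hybar.1
  have hPLbar : PL (ybar + (xs 0 - PL (xs 0))) = ybar := by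
    have hv : ybar - PL (xs 0) ∈ L.direction :=
      AffineSubspace.vsub_mem_direction hyL (hPLmem (xs 0))
    have heq : ybar + (xs 0 - PL (xs 0)) = xs 0 + (ybar - PL (xs 0)) := by abel
    rw [heq, htrans _ _ hv]
    simp
  -- projections of ybar + e onto subsets of L containing ybar
  have hproj : ∀ C : Set X, C ⊆ (L : Set X) → ybar ∈ C →
      projSet C (ybar + (xs 0 - PL (xs 0))) = {ybar} := by
    intro C hCL hyC
    have hnorm : ∀ c : X, ‖ybar + (xs 0 - PL (xs 0)) - c‖ =
        ‖xs 0 - (c - ybar + PL (xs 0))‖ := by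
      intro c; congr 1; abel
    have hmemL : ∀ c ∈ C, c - ybar + PL (xs 0) ∈ (L : Set X) := by
      intro c hc
      have hv : c - ybar ∈ L.direction :=
        AffineSubspace.vsub_mem_direction (hCL hc) hyL
      have := AffineSubspace.vadd_mem_of_mem_direction hv (hPLmem (xs 0))
      simpa [vadd_eq_add, add_comm] using this
    have hbase : ‖ybar + (xs 0 - PL (xs 0)) - ybar‖ = ‖xs 0 - PL (xs 0)‖ := by
      congr 1; abel
    ext z
    simp only [projSet, Set.mem_setOf_eq, Set.mem_singleton_iff]
    constructor
    · rintro ⟨hzC, hmin⟩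
      have h1 : ‖ybar + (xs 0 - PL (xs 0)) - z‖ ≤ ‖xs 0 - PL (xs 0)‖ := by
        have := hmin ybar hyC
        rwa [hbase] at this
      have h2 : ∀ c ∈ (L : Set X), ‖xs 0 - (z - ybar + PL (xs 0))‖ ≤ ‖xs 0 - c‖ := by
        intro c hc
        calc ‖xs 0 - (z - ybar + PL (xs 0))‖ = ‖ybar + (xs 0 - PL (xs 0)) - z‖ :=
              (hnorm z).symm
          _ ≤ ‖xs 0 - PL (xs 0)‖ := h1
          _ ≤ ‖xs 0 - c‖ := hPLmin (xs 0) c hc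
      have hz' : z - ybar + PL (xs 0) = PL (xs 0) :=
        huniq (xs 0) _ (hmemL z hzC) h2
      have h0 : z - ybar + PL (xs 0) = 0 + PL (xs 0) := by rw [hz', zero_add]
      exact sub_eq_zero.mp (add_right_cancel h0)
    · rintro rfl
      refine ⟨hyC, fun c hc => ?_⟩
      rw [hbase, hnorm c]
      exact hPLmin (xs 0) _ (hmemL c hc)
  exact ⟨hconv', hproj A hAL hybar.1, hproj B hBL hybar.2, hPLbar⟩
end

section
/- Let Φ : X ⇉ X be a set-valued operator, Ω a nonempty closed subset of X, w ∈ Ω, δ > 0 and κ ∈ [0,1). Assume that for all x in the closed ball B_δ(w), all x₊ ∈ Φ(x), and all x̄ ∈ P_Ω(x), one has ‖x₊ − x̄‖ ≤ κ‖x − x̄‖. If ‖x₀ − w‖ ≤ δ(1−κ)/2 and x_{n+1} ∈ Φ(xₙ) for all n, then (xₙ) converges to a point x̄ ∈ Ω ∩ B_δ(w) with R-linear rate: ‖xₙ − x̄‖ ≤ (‖x₀ − w‖(1+κ)/(1−κ)) κⁿ for all n ∈ ℕ. -/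
open Metric Filter
open scoped Topology

variable {X : Type*} [NormedAddCommGroup X] [InnerProductSpace ℝ X] [FiniteDimensional ℝ X]

theorem fejer_type_R_linear_convergence
    (Φ : X → Set X) (Ω : Set X) (hΩc : IsClosed Ω) (hΩne : Ω.Nonempty)
    (w : X) (hw : w ∈ Ω) (δ κ : ℝ) (hδ : 0 < δ) (hκ0 : 0 ≤ κ) (hκ1 : κ < 1)
    (hcontr : ∀ x ∈ closedBall w δ, ∀ xplus ∈ Φ x, ∀ xbar ∈ projSet Ω x,
      ‖xplus - xbar‖ ≤ κ * ‖x - xbar‖)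
    (xs : ℕ → X) (hx0 : ‖xs 0 - w‖ ≤ δ * (1 - κ) / 2)
    (hiter : ∀ n, xs (n + 1) ∈ Φ (xs n)) :
    ∃ xbar ∈ Ω ∩ closedBall w δ, Tendsto xs atTop (𝓝 xbar) ∧
      ∀ n, ‖xs n - xbar‖ ≤ ‖xs 0 - w‖ * (1 + κ) / (1 - κ) * κ ^ n := by

  have h1κ : (0:ℝ) < 1 - κ := by linarith
  have hne : (1 - κ) ≠ 0 := h1κ.ne'
  set e := ‖xs 0 - w‖ with he
  have he0 : 0 ≤ e := norm_nonneg _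
  have hproj : ∀ x : X, ∃ p ∈ projSet Ω x, ‖x - p‖ = Metric.infDist x Ω := by
    intro x
    obtain ⟨p, hpΩ, hpd⟩ := hΩc.exists_infDist_eq_dist hΩne x
    refine ⟨p, ⟨hpΩ, fun c hc => ?_⟩, ?_⟩
    · rw [← dist_eq_norm, ← hpd, ← dist_eq_norm]
      exact Metric.infDist_le_dist_of_mem hc
    · rw [← dist_eq_norm, hpd]
  have key : ∀ n, Metric.infDist (xs n) Ω ≤ κ ^ n * e ∧
      ‖xs n - w‖ ≤ (2 * e - (1 + κ) * κ ^ n * e) / (1 - κ) := by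
    intro n
    induction n with
    | zero =>
      constructor
      · have := Metric.infDist_le_dist_of_mem (x := xs 0) hw
        rw [dist_eq_norm] at this
        simpa [he] using this
      · rw [show (2 * e - (1 + κ) * κ ^ 0 * e) / (1 - κ) = e by field_simp; ring]
    | succ n ih =>
      obtain ⟨ih1, ih2⟩ := ih
      have hκn : (0:ℝ) ≤ κ ^ n := pow_nonneg hκ0 n
      have hball : xs n ∈ closedBall w δ := by
        rw [mem_closedBall, dist_eq_norm]
        refine ih2.trans ?_
        rw [div_le_iff₀ h1κ]
        nlinarith [mul_nonneg (mul_nonneg (by linarith : (0:ℝ) ≤ 1 + κ) hκn) he0]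
      obtain ⟨p, hp, hpd⟩ := hproj (xs n)
      have hc := hcontr (xs n) hball (xs (n+1)) (hiter n) p hp
      have hD : ‖xs n - p‖ ≤ κ ^ n * e := hpd.le.trans ih1
      have hstep : ‖xs (n+1) - p‖ ≤ κ * (κ ^ n * e) :=
        hc.trans (by nlinarith)
      constructor
      · have h1 : Metric.infDist (xs (n+1)) Ω ≤ ‖xs (n+1) - p‖ := by
          rw [← dist_eq_norm]; exact Metric.infDist_le_dist_of_mem hp.1
        calc Metric.infDist (xs (n+1)) Ω ≤ κ * (κ ^ n * e) := h1.trans hstep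
          _ = κ ^ (n+1) * e := by ring
      · have h2 : ‖xs (n+1) - w‖ ≤ ‖xs (n+1) - p‖ + ‖p - xs n‖ + ‖xs n - w‖ := by
          have := norm_add_le (xs (n+1) - p) (p - xs n)
          have h3 := norm_add_le (xs (n+1) - p + (p - xs n)) (xs n - w)
          simp only [sub_add_sub_cancel] at this h3
          linarith
        have hpx : ‖p - xs n‖ ≤ κ ^ n * e := by rw [norm_sub_rev]; exact hD
        have halg : (2 * e - (1 + κ) * κ ^ n * e) / (1 - κ) + (1 + κ) * (κ ^ n * e)
            = (2 * e - (1 + κ) * κ ^ (n+1) * e) / (1 - κ) := by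
          field_simp; ring
        calc ‖xs (n+1) - w‖ ≤ ‖xs (n+1) - p‖ + ‖p - xs n‖ + ‖xs n - w‖ := h2
          _ ≤ κ * (κ ^ n * e) + κ ^ n * e + (2 * e - (1 + κ) * κ ^ n * e) / (1 - κ) :=
              add_le_add (add_le_add hstep hpx) ih2
          _ = (2 * e - (1 + κ) * κ ^ n * e) / (1 - κ) + (1 + κ) * (κ ^ n * e) := by ring
          _ = (2 * e - (1 + κ) * κ ^ (n+1) * e) / (1 - κ) := halg
  have hball : ∀ n, xs n ∈ closedBall w δ := by
    intro n
    have hκn : (0:ℝ) ≤ κ ^ n := pow_nonneg hκ0 n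
    rw [mem_closedBall, dist_eq_norm]
    refine (key n).2.trans ?_
    rw [div_le_iff₀ h1κ]
    nlinarith [mul_nonneg (mul_nonneg (by linarith : (0:ℝ) ≤ 1 + κ) hκn) he0]
  have step : ∀ n, dist (xs n) (xs (n+1)) ≤ (1 + κ) * e * κ ^ n := by
    intro n
    obtain ⟨p, hp, hpd⟩ := hproj (xs n)
    have hc := hcontr (xs n) (hball n) (xs (n+1)) (hiter n) p hp
    have hD : ‖xs n - p‖ ≤ κ ^ n * e := hpd.le.trans (key n).1
    have hstep : ‖xs (n+1) - p‖ ≤ κ * (κ ^ n * e) := hc.trans (by nlinarith)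
    have h2 : dist (xs n) (xs (n+1)) ≤ ‖xs (n+1) - p‖ + ‖p - xs n‖ := by
      rw [dist_comm, dist_eq_norm]
      have := norm_add_le (xs (n+1) - p) (p - xs n)
      simpa [sub_add_sub_cancel] using this
    have hpx : ‖p - xs n‖ ≤ κ ^ n * e := by rw [norm_sub_rev]; exact hD
    calc dist (xs n) (xs (n+1)) ≤ κ * (κ ^ n * e) + κ ^ n * e := by linarith
      _ = (1 + κ) * e * κ ^ n := by ring
  have hcauchy : CauchySeq xs := cauchySeq_of_le_geometric κ ((1 + κ) * e) hκ1 step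
  obtain ⟨xbar, hx⟩ := cauchySeq_tendsto_of_complete hcauchy
  have hrate : ∀ n, ‖xs n - xbar‖ ≤ e * (1 + κ) / (1 - κ) * κ ^ n := by
    intro n
    have := dist_le_of_le_geometric_of_tendsto κ ((1 + κ) * e) hκ1 step hx n
    rw [dist_eq_norm] at this
    refine this.trans_eq ?_
    ring
  have hmemΩ : xbar ∈ Ω := by
    have hcont : Tendsto (fun n => Metric.infDist (xs n) Ω) atTop
        (𝓝 (Metric.infDist xbar Ω)) :=
      ((continuous_infDist_pt Ω).tendsto xbar).comp hx
    have hzero : Tendsto (fun n : ℕ => κ ^ n * e) atTop (𝓝 0) := by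
      simpa using (tendsto_pow_atTop_nhds_zero_of_lt_one hκ0 hκ1).mul_const e
    have hle : Metric.infDist xbar Ω ≤ 0 :=
      le_of_tendsto_of_tendsto' hcont hzero fun n => (key n).1
    have h0 : Metric.infDist xbar Ω = 0 :=
      le_antisymm hle (Metric.infDist_nonneg)
    exact (IsClosed.mem_iff_infDist_zero hΩc hΩne).mpr h0
  have hmemB : xbar ∈ closedBall w δ :=
    isClosed_closedBall.mem_of_tendsto hx (Filter.Eventually.of_forall hball)
  exact ⟨xbar, ⟨hmemΩ, hmemB⟩, hx, hrate⟩
end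

section
/- Let A be a closed subset of a Euclidean space that is (ε,δ)-regular at w ∈ A, and let U := {x : P_A(x) ⊆ B_δ(w)}. Then for every x ∈ U, every a ∈ P_A(x), and every x̄ ∈ A ∩ B_δ(w), one has ‖a − x̄‖ ≤ (1+ε)‖x − x̄‖. -/
open Metric Filter
open scoped Topology

variable {X : Type*} [NormedAddCommGroup X] [InnerProductSpace ℝ X] [FiniteDimensional ℝ X]

theorem projection_quasi_nonexpansive_of_regular
    (A : Set X) (hA : IsClosed A) (w : X) (hw : w ∈ A)
    (ε δ : ℝ) (hε : 0 ≤ ε) (hδ : 0 < δ) (hreg : regAt A w ε δ)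
    (x : X) (hx : projSet A x ⊆ closedBall w δ)
    (a : X) (ha : a ∈ projSet A x)
    (xbar : X) (hxbar : xbar ∈ A ∩ closedBall w δ) :
    ‖a - xbar‖ ≤ (1 + ε) * ‖x - xbar‖ := by
  have haA : a ∈ A := ha.1
  have haB : a ∈ closedBall w δ := hx ha
  have hu : x - a ∈ proxNormalCone A a := ⟨1, zero_le_one, x, ha, by simp⟩
  have hkey := hreg a ⟨haA, haB⟩ xbar hxbar (x - a) hu
  have hle : ‖x - a‖ ≤ ‖x - xbar‖ := ha.2 xbar hxbar.1
  have hsq : ‖a - xbar‖ ^ 2 ≤ (1 + ε) * ‖x - xbar‖ * ‖a - xbar‖ := by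
    have h1 : ‖a - xbar‖ ^ 2 = (inner ℝ (a - xbar) (a - x) : ℝ) + inner ℝ (a - xbar) (x - xbar) := by
      rw [← inner_add_right]
      simp [real_inner_self_eq_norm_sq]
    have h2 : (inner ℝ (a - xbar) (a - x) : ℝ) = inner ℝ (x - a) (xbar - a) := by
      rw [← inner_neg_neg, real_inner_comm]; simp
    have h3 : (inner ℝ (a - xbar) (x - xbar) : ℝ) ≤ ‖a - xbar‖ * ‖x - xbar‖ :=
      real_inner_le_norm _ _
    have h4 : (inner ℝ (x - a) (xbar - a) : ℝ) ≤ ε * ‖x - a‖ * ‖xbar - a‖ := hkey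
    have h5 : ‖xbar - a‖ = ‖a - xbar‖ := by rw [norm_sub_rev]
    have h6 : ε * ‖x - a‖ * ‖a - xbar‖ ≤ ε * ‖x - xbar‖ * ‖a - xbar‖ := by
      apply mul_le_mul_of_nonneg_right (mul_le_mul_of_nonneg_left hle hε) (norm_nonneg _)
    rw [h5] at h4
    linarith
  rcases eq_or_lt_of_le (norm_nonneg (a - xbar)) with h0 | h0
  · rw [← h0]
    positivity
  · have := (mul_le_mul_iff_of_pos_right h0).mp (by nlinarith : ‖a - xbar‖ * ‖a - xbar‖ ≤ ((1 + ε) * ‖x - xbar‖) * ‖a - xbar‖)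
    linarith
end

section
/- Let A be a closed subset of a Euclidean space that is (ε,δ)-regular at w ∈ A, and let U := {x : P_A(x) ⊆ B_δ(w)}. Then for every x ∈ U, every u ∈ R_A(x) = 2P_A(x) − x, and every x̄ ∈ A ∩ B_δ(w), one has ‖u − x̄‖ ≤ (1+2ε)‖x − x̄‖. -/
open Metric Filter
open scoped Topology

variable {X : Type*} [NormedAddCommGroup X] [InnerProductSpace ℝ X] [FiniteDimensional ℝ X]

theorem reflector_quasi_nonexpansive_of_regular
    (A : Set X) (hA : IsClosed A) (w : X) (hw : w ∈ A)
    (ε δ : ℝ) (hε : 0 ≤ ε) (hδ : 0 < δ) (hreg : regAt A w ε δ)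
    (x : X) (hx : projSet A x ⊆ closedBall w δ)
    (u : X) (hu : u ∈ reflSet A x)
    (xbar : X) (hxbar : xbar ∈ A ∩ closedBall w δ) :
    ‖u - xbar‖ ≤ (1 + 2 * ε) * ‖x - xbar‖ := by
  obtain ⟨a, haP, hua⟩ := hu
  have ha : a ∈ A := haP.1
  have hmin := haP.2
  have haB : a ∈ closedBall w δ := hx haP
  have hN : x - a ∈ proxNormalCone A a := ⟨1, zero_le_one, x, haP, by simp⟩
  have hregI : (inner ℝ (x - a) (xbar - a) : ℝ) ≤ ε * ‖x - a‖ * ‖xbar - a‖ :=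
    hreg a ⟨ha, haB⟩ xbar hxbar _ hN
  set I : ℝ := (inner ℝ (x - a) (xbar - a) : ℝ) with hI
  set p := ‖x - a‖ with hp
  set q := ‖xbar - a‖ with hq
  set d := ‖x - xbar‖ with hd
  have hp0 : 0 ≤ p := norm_nonneg _
  have hq0 : 0 ≤ q := norm_nonneg _
  have hd0 : 0 ≤ d := norm_nonneg _
  have hpd : p ≤ d := hmin xbar hxbar.1
  have hqpd : q ≤ p + d := by
    have h := norm_sub_le_norm_sub_add_norm_sub xbar x a
    have e : ‖xbar - x‖ = d := by rw [norm_sub_rev]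
    rw [e] at h
    linarith
  have hId2 : d ^ 2 = p ^ 2 - 2 * I + q ^ 2 := by
    have e : x - xbar = (x - a) - (xbar - a) := by abel
    rw [hd, e, norm_sub_sq_real, hI, hp, hq]
  have hId1 : ‖u - xbar‖ ^ 2 = d ^ 2 + 4 * I := by
    have e1 : u - xbar = (x - xbar) - (2:ℝ) • (x - a) := by rw [hua]; module
    have hJ : (inner ℝ (x - xbar) (x - a) : ℝ) = p ^ 2 - I := by
      have e : x - xbar = (x - a) - (xbar - a) := by abel
      rw [e, inner_sub_left, real_inner_self_eq_norm_sq, hI, hp,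
        real_inner_comm]
    rw [e1, norm_sub_sq_real, real_inner_smul_right, hJ, norm_smul]
    simp only [Real.norm_ofNat]
    rw [← hp, ← hd]
    ring
  have hqbd : q ≤ (1 + ε) * d := by
    rcases le_or_gt ε 1 with hε1 | hε1
    · have h1 : ε * p ≤ ε * d := mul_le_mul_of_nonneg_left hpd hε
      by_contra hcon
      push_neg at hcon
      have hA : 0 < q - ε * p - d := by nlinarith
      nlinarith [mul_pos hA (by linarith : (0:ℝ) < q - ε * p + d),
        mul_nonneg (mul_nonneg (sub_nonneg.mpr hε1)
          (by linarith : (0:ℝ) ≤ 1 + ε)) (sq_nonneg p)]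
    · nlinarith
  have hsq : ‖u - xbar‖ ^ 2 ≤ ((1 + 2 * ε) * d) ^ 2 := by
    rw [hId1]
    nlinarith [mul_nonneg hε (mul_nonneg hq0 hd0), mul_nonneg hε hd0,
      mul_le_mul_of_nonneg_left hqbd (mul_nonneg hε hp0),
      mul_le_mul_of_nonneg_right hpd (mul_nonneg hε hd0)]
  nlinarith [norm_nonneg (u - xbar), mul_nonneg (by linarith : (0:ℝ) ≤ 1 + 2*ε) hd0]
end

section
/- Let A be a closed set that is (ε,2δ)-regular at w ∈ A with ε ∈ [0,1/4) and δ > 0. Then for every x in the closed ball B_δ(w): (i) P_A(x) ⊆ B_{2δ}(w), and (ii) P_B(R_A(x)) ⊆ B_{3δ}(w) for any closed set B with w ∈ B. -/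
open Metric Filter
open scoped Topology

variable {X : Type*} [NormedAddCommGroup X] [InnerProductSpace ℝ X] [FiniteDimensional ℝ X]

theorem projections_stay_local
    (A B : Set X) (hA : IsClosed A) (hB : IsClosed B)
    (w : X) (hwA : w ∈ A) (hwB : w ∈ B)
    (ε δ : ℝ) (hε0 : 0 ≤ ε) (hε : ε < 1 / 4) (hδ : 0 < δ)
    (hreg : regAt A w ε (2 * δ))
    (x : X) (hx : x ∈ closedBall w δ) :
    projSet A x ⊆ closedBall w (2 * δ) ∧
      ∀ u ∈ reflSet A x, projSet B u ⊆ closedBall w (3 * δ) := by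
  have hxw : ‖x - w‖ ≤ δ := by
    rw [mem_closedBall, dist_eq_norm] at hx; exact hx
  -- Part (i)
  have h1 : projSet A x ⊆ closedBall w (2 * δ) := by
    rintro a ⟨haA, hmin⟩
    have hq : ‖x - a‖ ≤ ‖x - w‖ := hmin w hwA
    rw [mem_closedBall, dist_eq_norm]
    calc ‖a - w‖ ≤ ‖a - x‖ + ‖x - w‖ := norm_sub_le_norm_sub_add_norm_sub a x w
      _ = ‖x - a‖ + ‖x - w‖ := by rw [norm_sub_rev]
      _ ≤ δ + δ := add_le_add (hq.trans hxw) hxw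
      _ = 2 * δ := by ring
  refine ⟨h1, ?_⟩
  -- Part (ii)
  rintro u ⟨a, ha, rfl⟩ b ⟨hbB, hbmin⟩
  obtain ⟨haA, hmin⟩ := ha
  have hq : ‖x - a‖ ≤ ‖x - w‖ := hmin w hwA
  have haw : ‖a - w‖ ≤ 2 * δ := by
    have := h1 ⟨haA, hmin⟩
    rwa [mem_closedBall, dist_eq_norm] at this
  -- regularity applied at a with normal x - a and z = w
  have hN : (x - a) ∈ proxNormalCone A a :=
    ⟨1, zero_le_one, x, ⟨haA, hmin⟩, by simp⟩
  have hregapp : (inner ℝ (x - a) (w - a) : ℝ) ≤ ε * ‖x - a‖ * ‖w - a‖ := by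
    have hamem : a ∈ A ∩ closedBall w (2 * δ) := by
      refine ⟨haA, ?_⟩
      rw [mem_closedBall, dist_eq_norm]; exact haw
    have hwmem : w ∈ A ∩ closedBall w (2 * δ) := by
      refine ⟨hwA, ?_⟩
      rw [mem_closedBall]; simp; positivity
    exact hreg a hamem w hwmem (x - a) hN
  set u : X := (2:ℝ) • a - x with hu
  -- key identity : ‖u - w‖² = ‖x - w‖² + 4 ⟨x - a, w - a⟩
  have key : ‖u - w‖ ^ 2 = ‖x - w‖ ^ 2 + 4 * (inner ℝ (x - a) (w - a) : ℝ) := by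
    have h2 : u - w = (x - w) + (2:ℝ) • (a - x) := by
      rw [hu]; module
    have h3 : ((x - w) : X) = (x - a) - (w - a) := by abel
    rw [h2, norm_add_sq_real, norm_smul, inner_smul_right]
    have h4 : (inner ℝ (x - w) (a - x) : ℝ)
        = (inner ℝ (x - a) (w - a) : ℝ) - ‖x - a‖ ^ 2 := by
      rw [h3]
      rw [show (a - x : X) = -(x - a) by abel]
      rw [inner_neg_right, inner_sub_left, real_inner_self_eq_norm_sq,
        real_inner_comm (w - a) (x - a)]
      ring
    rw [h4, norm_sub_rev a x]
    simp
    ring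
  -- bound ‖w - a‖ by (‖u - w‖ + ‖x - w‖)/2
  have haw2 : 2 * ‖w - a‖ ≤ ‖u - w‖ + ‖x - w‖ := by
    have h5 : (2:ℝ) • (w - a) = (w - u) + (w - x) := by rw [hu]; module
    calc 2 * ‖w - a‖ = ‖(2:ℝ) • (w - a)‖ := by
          rw [norm_smul]; simp
      _ = ‖(w - u) + (w - x)‖ := by rw [h5]
      _ ≤ ‖w - u‖ + ‖w - x‖ := norm_add_le _ _
      _ = ‖u - w‖ + ‖x - w‖ := by rw [norm_sub_rev w u, norm_sub_rev w x]
  -- conclude ‖u - w‖ ≤ (3/2) δ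
  have hs : ‖u - w‖ ≤ 3 / 2 * δ := by
    have hq' : ‖x - a‖ ≤ δ := hq.trans hxw
    have hsq : ‖u - w‖ ^ 2 ≤ ‖x - w‖ ^ 2 + 4 * (ε * ‖x - a‖ * ‖w - a‖) := by
      rw [key]; linarith
    nlinarith [norm_nonneg (u - w), norm_nonneg (x - w), norm_nonneg (x - a),
      norm_nonneg (w - a), mul_nonneg (norm_nonneg (x - a)) (norm_nonneg (w - a)),
      mul_nonneg hε0 (mul_nonneg (norm_nonneg (x - a)) (norm_nonneg (w - a))),
      sq_nonneg (‖u - w‖ - 3 / 2 * δ), sq_nonneg (‖u - w‖ + δ),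
      mul_nonneg (norm_nonneg (u - w)) hδ.le]
  -- finish
  rw [mem_closedBall, dist_eq_norm]
  have hbu : ‖u - b‖ ≤ ‖u - w‖ := hbmin w hwB
  calc ‖b - w‖ ≤ ‖b - u‖ + ‖u - w‖ := norm_sub_le_norm_sub_add_norm_sub b u w
    _ = ‖u - b‖ + ‖u - w‖ := by rw [norm_sub_rev]
    _ ≤ ‖u - w‖ + ‖u - w‖ := by linarith
    _ ≤ 3 * δ := by linarith
end

section
/- Let A and B be closed sets, T the Douglas–Rachford operator, δ > 0, ε₁, ε₂ ∈ [0,1/4), and w ∈ A ∩ B. Assume A is (ε₁,2δ)-regular at w and B is (ε₂,3δ)-regular at w. Set Ω := A ∩ B and γ := (1 + (1+2ε₁)²(1+2ε₂)²)/2. Then for all x ∈ B_δ(w), all x₊ ∈ T(x), and all x̄ ∈ Ω ∩ B_{2δ}(w): ‖x − x₊‖² + ‖x₊ − x̄‖² ≤ γ‖x − x̄‖². -/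
open Metric Filter
open scoped Topology

variable {X : Type*} [NormedAddCommGroup X] [InnerProductSpace ℝ X] [FiniteDimensional ℝ X]

private lemma quadAux {ε r s d : ℝ} (hε0 : 0 ≤ ε) (hε1 : ε ≤ 1) (hd : 0 ≤ d)
    (h : s ^ 2 ≤ d ^ 2 - r ^ 2 + 2 * ε * r * s) : s ≤ ε * r + d := by
  have h1 : 0 ≤ (1 - ε) * (1 + ε) * r ^ 2 :=
    mul_nonneg (mul_nonneg (by linarith) (by linarith)) (sq_nonneg r)
  nlinarith [h1, sq_nonneg (s - ε * r - d), sq_nonneg (s - ε * r + d)]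

private lemma reflAux {ε : ℝ} (hε0 : 0 ≤ ε) (hε1 : ε ≤ 1) (p c z : X)
    (hinner : (inner ℝ (p - c) (z - c) : ℝ) ≤ ε * ‖p - c‖ * ‖z - c‖)
    (hrd : ‖p - c‖ ≤ ‖p - z‖) :
    ‖z - c‖ ≤ (1 + ε) * ‖p - z‖ ∧ ‖(2:ℝ) • c - p - z‖ ≤ (1 + 2 * ε) * ‖p - z‖ := by
  set r := ‖p - c‖
  set s := ‖z - c‖
  set d := ‖p - z‖
  set I : ℝ := inner ℝ (p - c) (z - c) with hI
  have hr0 : 0 ≤ r := norm_nonneg _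
  have hs0 : 0 ≤ s := norm_nonneg _
  have hd0 : 0 ≤ d := norm_nonneg _
  have idA : d ^ 2 = r ^ 2 - 2 * I + s ^ 2 := by
    have h1 : p - z = (p - c) - (z - c) := by abel
    rw [show d = ‖(p - c) - (z - c)‖ by rw [← h1], norm_sub_sq_real]
  have hsle : s ≤ ε * r + d := by
    apply quadAux hε0 hε1 hd0
    nlinarith [hinner]
  have hs1 : s ≤ (1 + ε) * d := by nlinarith
  refine ⟨hs1, ?_⟩
  have idB : ‖(2:ℝ) • c - p - z‖ ^ 2 = r ^ 2 + 2 * I + s ^ 2 := by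
    have h1 : (2:ℝ) • c - p - z = -((p - c) + (z - c)) := by
      rw [two_smul]; abel
    rw [h1, norm_neg, norm_add_sq_real]
  have hrs : r * s ≤ (1 + ε) * d ^ 2 := by nlinarith
  have hsq : ‖(2:ℝ) • c - p - z‖ ^ 2 ≤ ((1 + 2 * ε) * d) ^ 2 := by nlinarith [hinner]
  have h2 : 0 ≤ (1 + 2 * ε) * d := mul_nonneg (by linarith) hd0
  nlinarith [norm_nonneg ((2:ℝ) • c - p - z), hsq]

theorem DR_quasi_firm_estimate
    (A B : Set X) (hA : IsClosed A) (hB : IsClosed B)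
    (w : X) (hw : w ∈ A ∩ B)
    (δ ε₁ ε₂ : ℝ) (hδ : 0 < δ)
    (hε₁ : ε₁ ∈ Set.Ico (0:ℝ) (1 / 4)) (hε₂ : ε₂ ∈ Set.Ico (0:ℝ) (1 / 4))
    (hregA : regAt A w ε₁ (2 * δ)) (hregB : regAt B w ε₂ (3 * δ))
    (x : X) (hx : x ∈ closedBall w δ) (xplus : X) (hxplus : xplus ∈ DRop A B x)
    (xbar : X) (hxbar : xbar ∈ (A ∩ B) ∩ closedBall w (2 * δ)) :
    ‖x - xplus‖ ^ 2 + ‖xplus - xbar‖ ^ 2 ≤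
      (1 + (1 + 2 * ε₁) ^ 2 * (1 + 2 * ε₂) ^ 2) / 2 * ‖x - xbar‖ ^ 2 := by
  obtain ⟨a, haP, b, hbP, hxp⟩ := hxplus
  obtain ⟨haA, haMin⟩ := haP
  obtain ⟨hbB, hbMin⟩ := hbP
  obtain ⟨⟨hxbA, hxbB⟩, hxbBall⟩ := hxbar
  obtain ⟨hwA, hwB⟩ := hw
  obtain ⟨hε₁0, hε₁4⟩ := hε₁
  obtain ⟨hε₂0, hε₂4⟩ := hε₂
  have hε₁1 : ε₁ ≤ 1 := by linarith
  have hε₂1 : ε₂ ≤ 1 := by linarith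
  set y : X := (2:ℝ) • a - x with hy
  -- master identity
  have master : ‖x - xplus‖ ^ 2 + ‖xplus - xbar‖ ^ 2 =
      ‖x - xbar‖ ^ 2 + 2 * ((inner ℝ (x - a) (xbar - a) : ℝ)
        + (inner ℝ (y - b) (xbar - b) : ℝ)) := by
    subst hxp
    rw [hy]
    simp only [← real_inner_self_eq_norm_sq, inner_sub_left, inner_sub_right,
      inner_add_left, inner_add_right, real_inner_smul_left, real_inner_smul_right,
      real_inner_comm x a, real_inner_comm x b, real_inner_comm x xbar,
      real_inner_comm a b, real_inner_comm a xbar, real_inner_comm b xbar]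
    ring
  have hxw : ‖x - w‖ ≤ δ := by
    rw [← dist_eq_norm]; exact mem_closedBall.mp hx
  have hr_xw : ‖x - a‖ ≤ ‖x - w‖ := haMin w hwA
  have ha_ball : a ∈ closedBall w (2 * δ) := by
    rw [mem_closedBall, dist_eq_norm]
    calc ‖a - w‖ ≤ ‖a - x‖ + ‖x - w‖ := norm_sub_le_norm_sub_add_norm_sub a x w
    _ ≤ δ + δ := by rw [norm_sub_rev]; exact add_le_add (hr_xw.trans hxw) hxw
    _ = 2 * δ := by ring
  have hfN : x - a ∈ proxNormalCone A a :=
    ⟨1, zero_le_one, x, ⟨haA, haMin⟩, (one_smul ℝ (x - a)).symm⟩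
  have hgN : y - b ∈ proxNormalCone B b :=
    ⟨1, zero_le_one, y, ⟨hbB, hbMin⟩, (one_smul ℝ (y - b)).symm⟩
  have IAxb : (inner ℝ (x - a) (xbar - a) : ℝ) ≤ ε₁ * ‖x - a‖ * ‖xbar - a‖ :=
    hregA a ⟨haA, ha_ball⟩ xbar ⟨hxbA, hxbBall⟩ (x - a) hfN
  have IAw : (inner ℝ (x - a) (w - a) : ℝ) ≤ ε₁ * ‖x - a‖ * ‖w - a‖ :=
    hregA a ⟨haA, ha_ball⟩ w ⟨hwA, mem_closedBall_self (by linarith)⟩ (x - a) hfN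
  have hA1 := reflAux hε₁0 hε₁1 x a xbar IAxb (haMin xbar hxbA)
  have hAw := reflAux hε₁0 hε₁1 x a w IAw hr_xw
  have hyw : ‖y - w‖ ≤ (1 + 2 * ε₁) * ‖x - w‖ := hAw.2
  have hqw : ‖y - b‖ ≤ ‖y - w‖ := hbMin w hwB
  have hb_ball : b ∈ closedBall w (3 * δ) := by
    rw [mem_closedBall, dist_eq_norm]
    have h1 : ‖b - w‖ ≤ ‖b - y‖ + ‖y - w‖ := norm_sub_le_norm_sub_add_norm_sub b y w
    have h2 : ‖b - y‖ = ‖y - b‖ := norm_sub_rev b y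
    have h3 : (1 + 2 * ε₁) * ‖x - w‖ ≤ (1 + 2 * ε₁) * δ :=
      mul_le_mul_of_nonneg_left hxw (by linarith)
    have h4 : (1 + 2 * ε₁) * δ ≤ (3 / 2) * δ :=
      mul_le_mul_of_nonneg_right (by linarith) hδ.le
    linarith
  have hxb3 : xbar ∈ closedBall w (3 * δ) :=
    closedBall_subset_closedBall (by linarith) hxbBall
  have IB : (inner ℝ (y - b) (xbar - b) : ℝ) ≤ ε₂ * ‖y - b‖ * ‖xbar - b‖ :=
    hregB b ⟨hbB, hb_ball⟩ xbar ⟨hxbB, hxb3⟩ (y - b) hgN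
  have hB1 := reflAux hε₂0 hε₂1 y b xbar IB (hbMin xbar hxbB)
  set d := ‖x - xbar‖
  set r := ‖x - a‖
  set s := ‖xbar - a‖
  set q := ‖y - b‖
  set t := ‖xbar - b‖
  set D := ‖y - xbar‖
  have hd0 : 0 ≤ d := norm_nonneg _
  have hr0 : 0 ≤ r := norm_nonneg _
  have hs0 : 0 ≤ s := norm_nonneg _
  have hq0 : 0 ≤ q := norm_nonneg _
  have ht0 : 0 ≤ t := norm_nonneg _
  have hD0 : 0 ≤ D := norm_nonneg _
  have hrd : r ≤ d := haMin xbar hxbA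
  have hqD : q ≤ D := hbMin xbar hxbB
  have hsd : s ≤ (1 + ε₁) * d := hA1.1
  have htD : t ≤ (1 + ε₂) * D := hB1.1
  have hDd : D ≤ (1 + 2 * ε₁) * d := hA1.2
  have b1 : (inner ℝ (x - a) (xbar - a) : ℝ) ≤ ε₁ * (1 + ε₁) * d ^ 2 := by
    have h1 : r * s ≤ d * ((1 + ε₁) * d) := mul_le_mul hrd hsd hs0 hd0
    have h2 : ε₁ * (r * s) ≤ ε₁ * (d * ((1 + ε₁) * d)) :=
      mul_le_mul_of_nonneg_left h1 hε₁0
    calc (inner ℝ (x - a) (xbar - a) : ℝ) ≤ ε₁ * r * s := IAxb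
    _ ≤ ε₁ * (d * ((1 + ε₁) * d)) := by linarith
    _ = ε₁ * (1 + ε₁) * d ^ 2 := by ring
  have b2 : (inner ℝ (y - b) (xbar - b) : ℝ)
      ≤ ε₂ * (1 + ε₂) * ((1 + 2 * ε₁) * d) ^ 2 := by
    have hq' : q ≤ (1 + 2 * ε₁) * d := hqD.trans hDd
    have ht' : t ≤ (1 + ε₂) * ((1 + 2 * ε₁) * d) := by
      calc t ≤ (1 + ε₂) * D := htD
      _ ≤ (1 + ε₂) * ((1 + 2 * ε₁) * d) :=
        mul_le_mul_of_nonneg_left hDd (by linarith)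
    have h1 : q * t ≤ ((1 + 2 * ε₁) * d) * ((1 + ε₂) * ((1 + 2 * ε₁) * d)) :=
      mul_le_mul hq' ht' ht0 (by positivity)
    have h2 : ε₂ * (q * t) ≤ ε₂ * (((1 + 2 * ε₁) * d) * ((1 + ε₂) * ((1 + 2 * ε₁) * d))) :=
      mul_le_mul_of_nonneg_left h1 hε₂0
    calc (inner ℝ (y - b) (xbar - b) : ℝ) ≤ ε₂ * q * t := IB
    _ ≤ ε₂ * (((1 + 2 * ε₁) * d) * ((1 + ε₂) * ((1 + 2 * ε₁) * d))) := by linarith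
    _ = ε₂ * (1 + ε₂) * ((1 + 2 * ε₁) * d) ^ 2 := by ring
  have hfin : (1 + (1 + 2 * ε₁) ^ 2 * (1 + 2 * ε₂) ^ 2) / 2 * d ^ 2 =
      d ^ 2 + 2 * (ε₁ * (1 + ε₁) * d ^ 2 + ε₂ * (1 + ε₂) * ((1 + 2 * ε₁) * d) ^ 2) := by
    ring
  rw [master, hfin]
  linarith
end

section
/- Let A and B be closed sets, w ∈ A ∩ B, δ > 0, ε₁, ε₂ ∈ [0,1/4). Assume A is (ε₁,2δ)-regular at w and B is (ε₂,3δ)-regular at w. Then the Douglas–Rachford operator T is (A∩B, γ)-quasi firmly nonexpansive on B_δ(w) with γ = (1+(1+2ε₁)²(1+2ε₂)²)/2; that is, for all x ∈ B_δ(w), x₊ ∈ T(x), and x̄ ∈ P_{A∩B}(x): ‖x − x₊‖² + ‖x₊ − x̄‖² ≤ γ‖x − x̄‖². -/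
open Metric Filter
open scoped Topology

variable {X : Type*} [NormedAddCommGroup X] [InnerProductSpace ℝ X] [FiniteDimensional ℝ X]

private lemma aux_sqrt {a b : ℝ} (ha : 0 ≤ a) (hb : 0 ≤ b) (h : a^2 ≤ b^2) : a ≤ b := by
  nlinarith

private lemma aux_bound {ε ρ α s ip : ℝ} (hε0 : 0 ≤ ε) (hε1 : ε ≤ 1)
    (hα0 : 0 ≤ α) (hs0 : 0 ≤ s) (hρ0 : 0 ≤ ρ) (hαρ : α ≤ ρ)
    (hI : ρ^2 = α^2 - 2*ip + s^2) (hR : ip ≤ ε*α*s) : s ≤ (1+ε)*ρ := by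
  rcases eq_or_lt_of_le hρ0 with h|h
  · have hα : α = 0 := le_antisymm (by linarith) hα0
    subst hα
    have h' : ρ = 0 := h.symm
    subst h'
    nlinarith
  · nlinarith [sq_nonneg (s - ε*α - ρ),
      mul_nonneg hε0 (mul_nonneg hρ0 (sub_nonneg.2 hαρ)),
      mul_nonneg (mul_nonneg (sub_nonneg.2 hε1) (by linarith : (0:ℝ) ≤ 1+ε)) (sq_nonneg α)]

set_option maxHeartbeats 1000000 in
theorem DR_quasi_firmly_nonexpansive
    (A B : Set X) (hA : IsClosed A) (hB : IsClosed B)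
    (w : X) (hw : w ∈ A ∩ B)
    (δ ε₁ ε₂ : ℝ) (hδ : 0 < δ)
    (hε₁ : ε₁ ∈ Set.Ico (0:ℝ) (1 / 4)) (hε₂ : ε₂ ∈ Set.Ico (0:ℝ) (1 / 4))
    (hregA : regAt A w ε₁ (2 * δ)) (hregB : regAt B w ε₂ (3 * δ))
    (x : X) (hx : x ∈ closedBall w δ) (xplus : X) (hxplus : xplus ∈ DRop A B x)
    (xbar : X) (hxbar : xbar ∈ projSet (A ∩ B) x) :
    ‖x - xplus‖ ^ 2 + ‖xplus - xbar‖ ^ 2 ≤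
      (1 + (1 + 2 * ε₁) ^ 2 * (1 + 2 * ε₂) ^ 2) / 2 * ‖x - xbar‖ ^ 2 := by

  obtain ⟨a, ha, b, hb, hxe⟩ := hxplus
  obtain ⟨⟨hxbA, hxbB⟩, hxbmin⟩ := hxbar
  obtain ⟨hwA, hwB⟩ := hw
  have hxw : ‖x - w‖ ≤ δ := by rw [mem_closedBall, dist_eq_norm] at hx; exact hx
  have hρw : ‖x - xbar‖ ≤ ‖x - w‖ := hxbmin w ⟨hwA, hwB⟩
  have hρδ : ‖x - xbar‖ ≤ δ := hρw.trans hxw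
  have hαρ : ‖x - a‖ ≤ ‖x - xbar‖ := ha.2 xbar hxbA
  have hαw : ‖x - a‖ ≤ ‖x - w‖ := ha.2 w hwA
  -- ball memberships for the A-regularity
  have haball : a ∈ A ∩ closedBall w (2*δ) := by
    refine ⟨ha.1, ?_⟩
    rw [mem_closedBall, dist_eq_norm]
    calc ‖a - w‖ = ‖(a - x) + (x - w)‖ := by rw [sub_add_sub_cancel]
      _ ≤ ‖a - x‖ + ‖x - w‖ := norm_add_le _ _
      _ = ‖x - a‖ + ‖x - w‖ := by rw [norm_sub_rev]
      _ ≤ 2*δ := by linarith [hαw.trans hxw]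
  have hxbw : ‖xbar - w‖ ≤ 2*δ := by
    calc ‖xbar - w‖ = ‖(xbar - x) + (x - w)‖ := by rw [sub_add_sub_cancel]
      _ ≤ ‖xbar - x‖ + ‖x - w‖ := norm_add_le _ _
      _ = ‖x - xbar‖ + ‖x - w‖ := by rw [norm_sub_rev]
      _ ≤ 2*δ := by linarith
  have hxbball : xbar ∈ A ∩ closedBall w (2*δ) :=
    ⟨hxbA, by rw [mem_closedBall, dist_eq_norm]; exact hxbw⟩
  have hwball : w ∈ A ∩ closedBall w (2*δ) :=
    ⟨hwA, by rw [mem_closedBall, dist_eq_norm]; simp; positivity⟩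
  have hNA : x - a ∈ proxNormalCone A a :=
    ⟨1, zero_le_one, x, ha, (one_smul ℝ (x-a)).symm⟩
  -- A-regularity applied with z = xbar and z = w
  have hR1 : (inner ℝ (x-a) (xbar - a) : ℝ) ≤ ε₁ * ‖x-a‖ * ‖xbar-a‖ :=
    hregA a haball xbar hxbball (x-a) hNA
  have hR1w : (inner ℝ (x-a) (w - a) : ℝ) ≤ ε₁ * ‖x-a‖ * ‖w-a‖ :=
    hregA a haball w hwball (x-a) hNA
  have hI1 : ‖x - xbar‖^2 = ‖x-a‖^2 - 2*(inner ℝ (x-a) (xbar-a) : ℝ) + ‖xbar-a‖^2 := by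
    calc ‖x - xbar‖^2 = ‖(x-a) - (xbar-a)‖^2 := by rw [sub_sub_sub_cancel_right]
      _ = _ := norm_sub_sq_real _ _
  have hI1w : ‖x - w‖^2 = ‖x-a‖^2 - 2*(inner ℝ (x-a) (w-a) : ℝ) + ‖w-a‖^2 := by
    calc ‖x - w‖^2 = ‖(x-a) - (w-a)‖^2 := by rw [sub_sub_sub_cancel_right]
      _ = _ := norm_sub_sq_real _ _
  have hε₁1 : ε₁ ≤ 1 := by linarith [hε₁.2]
  have hE1 : ‖xbar - a‖ ≤ (1+ε₁)*‖x - xbar‖ :=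
    aux_bound hε₁.1 hε₁1 (norm_nonneg _) (norm_nonneg _) (norm_nonneg _) hαρ hI1 hR1
  have hE1w : ‖w - a‖ ≤ (1+ε₁)*‖x - w‖ :=
    aux_bound hε₁.1 hε₁1 (norm_nonneg _) (norm_nonneg _) (norm_nonneg _) hαw hI1w hR1w
  have hI2 : ‖(2:ℝ)•a - x - xbar‖^2 = ‖x - xbar‖^2 + 4*(inner ℝ (x-a) (xbar-a) : ℝ) := by
    have e : (2:ℝ)•a - x - xbar = -((x-a) + (xbar-a)) := by module
    rw [e, norm_neg, norm_add_sq_real]; linarith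
  have hI2w : ‖(2:ℝ)•a - x - w‖^2 = ‖x - w‖^2 + 4*(inner ℝ (x-a) (w-a) : ℝ) := by
    have e : (2:ℝ)•a - x - w = -((x-a) + (w-a)) := by module
    rw [e, norm_neg, norm_add_sq_real]; linarith
  have hE2 : ‖(2:ℝ)•a - x - xbar‖ ≤ (1+2*ε₁)*‖x - xbar‖ := by
    refine aux_sqrt (norm_nonneg _)
      (mul_nonneg (by linarith [hε₁.1]) (norm_nonneg _)) ?_
    rw [hI2]
    nlinarith [mul_le_mul_of_nonneg_left
      (mul_le_mul hαρ hE1 (norm_nonneg _) (norm_nonneg _)) hε₁.1]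
  have hE2w : ‖(2:ℝ)•a - x - w‖ ≤ (1+2*ε₁)*‖x - w‖ := by
    refine aux_sqrt (norm_nonneg _)
      (mul_nonneg (by linarith [hε₁.1]) (norm_nonneg _)) ?_
    rw [hI2w]
    nlinarith [mul_le_mul_of_nonneg_left
      (mul_le_mul hαw hE1w (norm_nonneg _) (norm_nonneg _)) hε₁.1]
  -- b lies in the 3δ-ball
  have hβw : ‖(2:ℝ)•a - x - b‖ ≤ ‖(2:ℝ)•a - x - w‖ := hb.2 w hwB
  have hbball : b ∈ B ∩ closedBall w (3*δ) := by
    refine ⟨hb.1, ?_⟩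
    rw [mem_closedBall, dist_eq_norm]
    have h1 : ‖b - w‖ ≤ ‖b - ((2:ℝ)•a - x)‖ + ‖(2:ℝ)•a - x - w‖ := by
      calc ‖b - w‖ = ‖(b - ((2:ℝ)•a - x)) + (((2:ℝ)•a - x) - w)‖ := by rw [sub_add_sub_cancel]
        _ ≤ _ := norm_add_le _ _
    rw [norm_sub_rev b ((2:ℝ)•a - x)] at h1
    nlinarith [hβw, hE2w, hxw, hε₁.1, hε₁.2, norm_nonneg (x - w),
      mul_le_mul_of_nonneg_left hxw (by linarith [hε₁.1] : (0:ℝ) ≤ 1+2*ε₁),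
      mul_lt_mul_of_pos_right hε₁.2 hδ]
  have hxbball3 : xbar ∈ B ∩ closedBall w (3*δ) := by
    refine ⟨hxbB, ?_⟩
    rw [mem_closedBall, dist_eq_norm]
    linarith
  have hNB : (2:ℝ)•a - x - b ∈ proxNormalCone B b :=
    ⟨1, zero_le_one, (2:ℝ)•a - x, hb, (one_smul ℝ _).symm⟩
  have hR2 : (inner ℝ ((2:ℝ)•a - x - b) (xbar - b) : ℝ)
      ≤ ε₂ * ‖(2:ℝ)•a - x - b‖ * ‖xbar - b‖ :=
    hregB b hbball xbar hxbball3 _ hNB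
  have hβσ : ‖(2:ℝ)•a - x - b‖ ≤ ‖(2:ℝ)•a - x - xbar‖ := hb.2 xbar hxbB
  have hI3 : ‖(2:ℝ)•a - x - xbar‖^2
      = ‖(2:ℝ)•a - x - b‖^2 - 2*(inner ℝ ((2:ℝ)•a - x - b) (xbar - b) : ℝ) + ‖xbar - b‖^2 := by
    calc ‖(2:ℝ)•a - x - xbar‖^2 = ‖((2:ℝ)•a - x - b) - (xbar - b)‖^2 := by
          rw [sub_sub_sub_cancel_right]
      _ = _ := norm_sub_sq_real _ _
  have hε₂1 : ε₂ ≤ 1 := by linarith [hε₂.2]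
  have hE3 : ‖xbar - b‖ ≤ (1+ε₂)*‖(2:ℝ)•a - x - xbar‖ :=
    aux_bound hε₂.1 hε₂1 (norm_nonneg _) (norm_nonneg _) (norm_nonneg _) hβσ hI3 hR2
  have hI4 : ‖(2:ℝ)•b - ((2:ℝ)•a - x) - xbar‖^2
      = ‖(2:ℝ)•a - x - xbar‖^2 + 4*(inner ℝ ((2:ℝ)•a - x - b) (xbar - b) : ℝ) := by
    have e : (2:ℝ)•b - ((2:ℝ)•a - x) - xbar = -(((2:ℝ)•a - x - b) + (xbar - b)) := by module
    rw [e, norm_neg, norm_add_sq_real]; linarith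
  have hσ2 : ‖(2:ℝ)•a - x - xbar‖^2 ≤ ((1+2*ε₁)*‖x - xbar‖)^2 :=
    pow_le_pow_left₀ (norm_nonneg _) hE2 2
  have hE4 : ‖(2:ℝ)•b - ((2:ℝ)•a - x) - xbar‖^2
      ≤ (1+2*ε₁)^2 * (1+2*ε₂)^2 * ‖x - xbar‖^2 := by
    rw [hI4]
    have h1 : ‖(2:ℝ)•a - x - b‖ * ‖xbar - b‖
        ≤ ‖(2:ℝ)•a - x - xbar‖ * ((1+ε₂)*‖(2:ℝ)•a - x - xbar‖) :=
      mul_le_mul hβσ hE3 (norm_nonneg _) (norm_nonneg _)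
    nlinarith [mul_le_mul_of_nonneg_left h1 hε₂.1,
      mul_le_mul_of_nonneg_left hσ2 (sq_nonneg (1+2*ε₂)), sq_nonneg (1+2*ε₂), hε₂.1]
  -- parallelogram law
  have hu1 : (x - xbar) - ((2:ℝ)•b - ((2:ℝ)•a - x) - xbar) = (2:ℝ)•(x - xplus) := by
    rw [hxe]; module
  have hu2 : (x - xbar) + ((2:ℝ)•b - ((2:ℝ)•a - x) - xbar) = (2:ℝ)•(xplus - xbar) := by
    rw [hxe]; module
  have e1 := norm_sub_sq_real (x - xbar) ((2:ℝ)•b - ((2:ℝ)•a - x) - xbar)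
  have e2 := norm_add_sq_real (x - xbar) ((2:ℝ)•b - ((2:ℝ)•a - x) - xbar)
  rw [hu1, norm_smul] at e1
  rw [hu2, norm_smul] at e2
  simp only [Real.norm_ofNat] at e1 e2
  nlinarith [e1, e2, hE4]
end

section
/- Let A, B be closed sets and w ∈ A ∩ B. Define θ̄(N₁,N₂) := sup{⟨u,v⟩ : u ∈ N₁ ∩ B, v ∈ −N₂ ∩ B} for closed cones N₁, N₂ (B the closed unit ball). Then {A,B} is strongly regular at w, i.e., N_A(w) ∩ (−N_B(w)) = {0}, if and only if θ̄(N_A(w), N_B(w)) < 1. -/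
open Metric Filter
open scoped Topology

variable {X : Type*} [NormedAddCommGroup X] [InnerProductSpace ℝ X] [FiniteDimensional ℝ X]

lemma zero_mem_proxNormalCone {C : Set X} {x : X} (hx : x ∈ C) :
    (0 : X) ∈ proxNormalCone C x :=
  ⟨0, le_refl _, x, ⟨hx, fun c _ => by simp⟩, by simp⟩

lemma zero_mem_limNormalCone {C : Set X} {w : X} (hw : w ∈ C) :
    (0 : X) ∈ limNormalCone C w :=
  ⟨fun _ => w, fun _ => 0, fun _ => hw, fun _ => zero_mem_proxNormalCone hw,
    tendsto_const_nhds, tendsto_const_nhds⟩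

lemma smul_mem_proxNormalCone {C : Set X} {x u : X} {t : ℝ} (ht : 0 ≤ t)
    (hu : u ∈ proxNormalCone C x) : t • u ∈ proxNormalCone C x := by
  obtain ⟨s, hs, z, hz, rfl⟩ := hu
  exact ⟨t * s, mul_nonneg ht hs, z, hz, smul_smul t s _⟩

lemma smul_mem_limNormalCone {C : Set X} {w u : X} {t : ℝ} (ht : 0 ≤ t)
    (hu : u ∈ limNormalCone C w) : t • u ∈ limNormalCone C w := by
  obtain ⟨xs, us, h1, h2, h3, h4⟩ := hu
  exact ⟨xs, fun n => t • us n, h1, fun n => smul_mem_proxNormalCone ht (h2 n), h3,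
    h4.const_smul t⟩

lemma isClosed_limNormalCone (C : Set X) (w : X) : IsClosed (limNormalCone C w) := by
  apply IsSeqClosed.isClosed
  intro f u hf hfu
  have key : ∀ n : ℕ, ∃ x v : X, x ∈ C ∧ v ∈ proxNormalCone C x ∧
      dist x w < 1 / (n + 1) ∧ dist v (f n) < 1 / (n + 1) := by
    intro n
    obtain ⟨xs, us, h1, h2, h3, h4⟩ := hf n
    have hpos : (0 : ℝ) < 1 / (n + 1) := by positivity
    have e1 := h3.eventually (ball_mem_nhds w hpos)
    have e2 := h4.eventually (ball_mem_nhds (f n) hpos)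
    obtain ⟨m, hm1, hm2⟩ := (e1.and e2).exists
    exact ⟨xs m, us m, h1 m, h2 m, hm1, hm2⟩
  choose xs vs hxC hvN hxd hvd using key
  have htend0 : Tendsto (fun n : ℕ => 1 / ((n : ℝ) + 1)) atTop (𝓝 0) :=
    tendsto_one_div_add_atTop_nhds_zero_nat
  have hx : Tendsto xs atTop (𝓝 w) := by
    rw [tendsto_iff_dist_tendsto_zero]
    exact squeeze_zero (fun n => dist_nonneg) (fun n => (hxd n).le) htend0
  have hv : Tendsto vs atTop (𝓝 u) := by
    rw [tendsto_iff_dist_tendsto_zero]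
    have hb : ∀ n, dist (vs n) u ≤ 1 / ((n : ℝ) + 1) + dist (f n) u := fun n =>
      (dist_triangle (vs n) (f n) u).trans (by linarith [(hvd n).le])
    have : Tendsto (fun n : ℕ => 1 / ((n : ℝ) + 1) + dist (f n) u) atTop (𝓝 (0 + 0)) :=
      htend0.add (tendsto_iff_dist_tendsto_zero.mp hfu)
    rw [add_zero] at this
    exact squeeze_zero (fun n => dist_nonneg) hb this
  exact ⟨xs, vs, hxC, hvN, hx, hv⟩

theorem strong_regularity_iff_thetaBar_lt_one
    (A B : Set X) (hA : IsClosed A) (hB : IsClosed B)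
    (w : X) (hw : w ∈ A ∩ B) :
    limNormalCone A w ∩ -limNormalCone B w = {0} ↔
      thetaBar (limNormalCone A w) (limNormalCone B w) < 1 := by
  set N₁ := limNormalCone A w with hN₁
  set N₂ := limNormalCone B w with hN₂
  set S := {r : ℝ | ∃ u ∈ N₁, ∃ v ∈ -N₂, ‖u‖ ≤ 1 ∧ ‖v‖ ≤ 1 ∧ r = (inner ℝ u v : ℝ)} with hS
  have h0A : (0 : X) ∈ N₁ := zero_mem_limNormalCone hw.1
  have h0B : (0 : X) ∈ -N₂ := by
    rw [Set.mem_neg, neg_zero]; exact zero_mem_limNormalCone hw.2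
  have hS0 : (0 : ℝ) ∈ S := ⟨0, h0A, 0, h0B, by simp, by simp, by simp⟩
  have hSbdd : ∀ r ∈ S, r ≤ 1 := by
    rintro r ⟨u, -, v, -, hu1, hv1, rfl⟩
    calc (inner ℝ u v : ℝ) ≤ ‖u‖ * ‖v‖ := real_inner_le_norm u v
      _ ≤ 1 * 1 := mul_le_mul hu1 hv1 (norm_nonneg _) zero_le_one
      _ = 1 := one_mul 1
  constructor
  · intro hreg
    -- S is the image of a compact set under the (continuous) inner product
    have hK : IsCompact ((N₁ ∩ closedBall (0:X) 1) ×ˢ ((-N₂) ∩ closedBall (0:X) 1)) := by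
      apply IsCompact.prod
      · exact (isCompact_closedBall (0:X) 1).inter_left (isClosed_limNormalCone A w)
      · exact (isCompact_closedBall (0:X) 1).inter_left (isClosed_limNormalCone B w).neg
    have hcont : Continuous fun p : X × X => (inner ℝ p.1 p.2 : ℝ) := continuous_inner
    have hSeq : S = (fun p : X × X => (inner ℝ p.1 p.2 : ℝ)) ''
        ((N₁ ∩ closedBall (0:X) 1) ×ˢ ((-N₂) ∩ closedBall (0:X) 1)) := by
      ext r
      constructor
      · rintro ⟨u, hu, v, hv, hu1, hv1, rfl⟩
        exact ⟨(u, v), ⟨⟨hu, by simpa using hu1⟩, ⟨hv, by simpa using hv1⟩⟩, rfl⟩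
      · rintro ⟨⟨u, v⟩, ⟨⟨hu, hu1⟩, hv, hv1⟩, rfl⟩
        exact ⟨u, hu, v, hv, by simpa using hu1, by simpa using hv1, rfl⟩
    have hScompact : IsCompact S := hSeq ▸ hK.image hcont
    have hsup_mem : sSup S ∈ S :=
      hScompact.sSup_mem ⟨0, hS0⟩
    have hsupS := hsup_mem
    obtain ⟨u, hu, v, hv, hu1, hv1, hr⟩ := hsup_mem
    rw [thetaBar]
    by_contra hge
    push_neg at hge
    have hle : sSup S ≤ 1 := hSbdd _ hsupS
    have heq : sSup S = 1 := le_antisymm hle hge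
    have hiv : (inner ℝ u v : ℝ) = 1 := by rw [← hr, heq]
    have huv : ‖u‖ * ‖v‖ = 1 := by
      have h1 : (1:ℝ) ≤ ‖u‖ * ‖v‖ := hiv ▸ real_inner_le_norm u v
      have h2 : ‖u‖ * ‖v‖ ≤ 1 := by
        calc ‖u‖ * ‖v‖ ≤ 1 * 1 := mul_le_mul hu1 hv1 (norm_nonneg _) zero_le_one
          _ = 1 := one_mul 1
      linarith
    have hnu : ‖u‖ = 1 := by
      have : ‖u‖ ≠ 0 := fun h => by simp [h] at huv
      nlinarith [norm_nonneg u, norm_nonneg v]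
    have hnv : ‖v‖ = 1 := by nlinarith [norm_nonneg v]
    have huveq : u = v := by
      have : (inner ℝ u v : ℝ) = ‖u‖ * ‖v‖ := by rw [hiv, huv]
      have := (inner_eq_norm_mul_iff_real).mp this
      rwa [hnu, hnv, one_smul, one_smul] at this
    have humem : u ∈ N₁ ∩ -N₂ := ⟨hu, huveq ▸ hv⟩
    rw [hreg, Set.mem_singleton_iff] at humem
    rw [humem] at hnu
    simp at hnu
  · intro hlt
    apply Set.eq_singleton_iff_unique_mem.mpr
    refine ⟨⟨h0A, h0B⟩, ?_⟩
    rintro u ⟨hu1, hu2⟩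
    by_contra hne
    have hnorm : ‖u‖ ≠ 0 := norm_ne_zero_iff.mpr hne
    have hnpos : (0:ℝ) < ‖u‖ := (norm_nonneg u).lt_of_ne (Ne.symm hnorm)
    set c := ‖u‖⁻¹ with hc
    have hcpos : 0 ≤ c := by positivity
    have hcu : ‖c • u‖ = 1 := by
      rw [norm_smul, hc, Real.norm_eq_abs, abs_of_nonneg (by positivity)]
      field_simp
    have hcuA : c • u ∈ N₁ := smul_mem_limNormalCone hcpos hu1
    have hcuB : c • u ∈ -N₂ := by
      rw [Set.mem_neg, ← smul_neg]
      exact smul_mem_limNormalCone hcpos (Set.mem_neg.mp hu2)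
    have hone : (1:ℝ) ∈ S := by
      refine ⟨c • u, hcuA, c • u, hcuB, hcu.le, hcu.le, ?_⟩
      rw [real_inner_self_eq_norm_sq, hcu]; norm_num
    have : (1:ℝ) ≤ sSup S := le_csSup ⟨1, hSbdd⟩ hone
    rw [thetaBar] at hlt
    exact absurd hlt (not_lt.mpr this)
end

section
/- Let A, B be closed sets with θ̄ := θ̄(N_A(w), N_B(w)) < 1 at w ∈ A ∩ B. Then for every θ ∈ (θ̄, 1) there exists δ > 0 such that whenever a ∈ A ∩ B_δ(w), b ∈ B ∩ B_δ(w), u ∈ N^P_A(a), and v ∈ N^P_B(b), one has ⟨u, v⟩ ≥ −θ‖u‖‖v‖. -/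
open Metric Filter
open scoped Topology

variable {X : Type*} [NormedAddCommGroup X] [InnerProductSpace ℝ X] [FiniteDimensional ℝ X]

lemma proxNormalCone_smul {C : Set X} {x u : X} (hu : u ∈ proxNormalCone C x)
    {c : ℝ} (hc : 0 ≤ c) : c • u ∈ proxNormalCone C x := by
  obtain ⟨t, ht, z, hz, rfl⟩ := hu
  exact ⟨c * t, mul_nonneg hc ht, z, hz, smul_smul c t _⟩

theorem proximal_normals_angle_bound_of_thetaBar
    (A B : Set X) (hA : IsClosed A) (hB : IsClosed B)
    (w : X) (hw : w ∈ A ∩ B)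
    (hθbar : thetaBar (limNormalCone A w) (limNormalCone B w) < 1)
    (θ : ℝ) (hθ1 : thetaBar (limNormalCone A w) (limNormalCone B w) < θ) (hθ2 : θ < 1) :
    ∃ δ > 0, ∀ a ∈ A ∩ closedBall w δ, ∀ b ∈ B ∩ closedBall w δ,
      ∀ u ∈ proxNormalCone A a, ∀ v ∈ proxNormalCone B b,
        -(θ * ‖u‖ * ‖v‖) ≤ (inner ℝ u v : ℝ) := by
  by_contra hcon
  push_neg at hcon
  choose a ha b hb u hu v hv hlt using fun n : ℕ =>
    hcon (1 / (n + 1 : ℝ)) (by positivity)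
  -- the normals are nonzero
  have hun : ∀ n, ‖u n‖ ≠ 0 := by
    intro n h
    have := hlt n
    rw [show u n = 0 from norm_eq_zero.mp h] at this
    simp at this
  have hvn : ∀ n, ‖v n‖ ≠ 0 := by
    intro n h
    have := hlt n
    rw [show v n = 0 from norm_eq_zero.mp h] at this
    simp at this
  have hup : ∀ n, (0:ℝ) < ‖u n‖ := fun n => (norm_nonneg _).lt_of_ne' (hun n)
  have hvp : ∀ n, (0:ℝ) < ‖v n‖ := fun n => (norm_nonneg _).lt_of_ne' (hvn n)
  set uh : ℕ → X := fun n => ‖u n‖⁻¹ • u n with huhdef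
  set vh : ℕ → X := fun n => ‖v n‖⁻¹ • v n with hvhdef
  have huhn : ∀ n, ‖uh n‖ = 1 := by
    intro n
    simp [huhdef, norm_smul, abs_of_nonneg (inv_nonneg.mpr (norm_nonneg (u n))),
      inv_mul_cancel₀ (hun n)]
  have hvhn : ∀ n, ‖vh n‖ = 1 := by
    intro n
    simp [hvhdef, norm_smul, abs_of_nonneg (inv_nonneg.mpr (norm_nonneg (v n))),
      inv_mul_cancel₀ (hvn n)]
  have huhcone : ∀ n, uh n ∈ proxNormalCone A (a n) :=
    fun n => proxNormalCone_smul (hu n) (inv_nonneg.mpr (norm_nonneg _))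
  have hvhcone : ∀ n, vh n ∈ proxNormalCone B (b n) :=
    fun n => proxNormalCone_smul (hv n) (inv_nonneg.mpr (norm_nonneg _))
  -- normalized inequality
  have hineq : ∀ n, (inner ℝ (uh n) (vh n) : ℝ) < -θ := by
    intro n
    have h1 : (inner ℝ (uh n) (vh n) : ℝ)
        = ‖u n‖⁻¹ * (‖v n‖⁻¹ * (inner ℝ (u n) (v n) : ℝ)) := by
      simp only [huhdef, hvhdef, real_inner_smul_left, real_inner_smul_right]
      ring
    rw [h1]
    have h2 : (inner ℝ (u n) (v n) : ℝ) < -(θ * ‖u n‖ * ‖v n‖) := hlt n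
    have h3 : ‖u n‖⁻¹ * (‖v n‖⁻¹ * (inner ℝ (u n) (v n) : ℝ))
        < ‖u n‖⁻¹ * (‖v n‖⁻¹ * (-(θ * ‖u n‖ * ‖v n‖))) := by
      apply mul_lt_mul_of_pos_left _ (inv_pos.mpr (hup n))
      exact mul_lt_mul_of_pos_left h2 (inv_pos.mpr (hvp n))
    calc _ < ‖u n‖⁻¹ * (‖v n‖⁻¹ * (-(θ * ‖u n‖ * ‖v n‖))) := h3
      _ = -θ := by
        have e : ‖u n‖⁻¹ * (‖v n‖⁻¹ * (-(θ * ‖u n‖ * ‖v n‖)))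
            = -(θ * (‖u n‖⁻¹ * ‖u n‖) * (‖v n‖⁻¹ * ‖v n‖)) := by ring
        rw [e, inv_mul_cancel₀ (hun n), inv_mul_cancel₀ (hvn n), mul_one, mul_one]
  -- compactness: extract convergent subsequences
  obtain ⟨U, hUmem, φ, hφ, hUlim⟩ :=
    (isCompact_sphere (0:X) 1).tendsto_subseq (fun n => mem_sphere_zero_iff_norm.mpr (huhn n))
  obtain ⟨V, hVmem, ψ, hψ, hVlim⟩ :=
    (isCompact_sphere (0:X) 1).tendsto_subseq
      (fun n => mem_sphere_zero_iff_norm.mpr (hvhn (φ n)))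
  set σ : ℕ → ℕ := fun n => φ (ψ n) with hσdef
  have hσmono : StrictMono σ := hφ.comp hψ
  have hUlim' : Tendsto (fun n => uh (σ n)) atTop (𝓝 U) := by
    have := hUlim.comp hψ.tendsto_atTop
    exact this
  have hVlim' : Tendsto (fun n => vh (σ n)) atTop (𝓝 V) := hVlim
  -- convergence of base points
  have haw : Tendsto a atTop (𝓝 w) := by
    rw [tendsto_iff_dist_tendsto_zero]
    apply squeeze_zero (fun n => dist_nonneg)
      (fun n => mem_closedBall.mp (ha n).2)
    exact tendsto_one_div_add_atTop_nhds_zero_nat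
  have hbw : Tendsto b atTop (𝓝 w) := by
    rw [tendsto_iff_dist_tendsto_zero]
    apply squeeze_zero (fun n => dist_nonneg)
      (fun n => mem_closedBall.mp (hb n).2)
    exact tendsto_one_div_add_atTop_nhds_zero_nat
  -- limiting normal cone memberships
  have hUlnc : U ∈ limNormalCone A w :=
    ⟨fun n => a (σ n), fun n => uh (σ n), fun n => (ha (σ n)).1,
      fun n => huhcone (σ n), haw.comp hσmono.tendsto_atTop, hUlim'⟩
  have hVlnc : V ∈ limNormalCone B w :=
    ⟨fun n => b (σ n), fun n => vh (σ n), fun n => (hb (σ n)).1,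
      fun n => hvhcone (σ n), hbw.comp hσmono.tendsto_atTop, hVlim'⟩
  -- limit inner product
  have hinner : (inner ℝ U V : ℝ) ≤ -θ := by
    have htend : Tendsto (fun n => (inner ℝ (uh (σ n)) (vh (σ n)) : ℝ)) atTop
        (𝓝 (inner ℝ U V : ℝ)) := hUlim'.inner hVlim'
    exact le_of_tendsto htend (Eventually.of_forall fun n => (hineq (σ n)).le)
  -- build element of the sup set
  set S := {r : ℝ | ∃ u ∈ limNormalCone A w, ∃ v ∈ -(limNormalCone B w),
    ‖u‖ ≤ 1 ∧ ‖v‖ ≤ 1 ∧ r = (inner ℝ u v : ℝ)} with hSdef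
  have hmem : (inner ℝ U (-V) : ℝ) ∈ S := by
    refine ⟨U, hUlnc, -V, ?_, ?_, ?_, rfl⟩
    · simpa using hVlnc
    · rw [mem_sphere_zero_iff_norm.mp hUmem]
    · rw [norm_neg, mem_sphere_zero_iff_norm.mp hVmem]
  have hbdd : BddAbove S := by
    refine ⟨1, fun r hr => ?_⟩
    obtain ⟨u', _, v', _, hu1, hv1, rfl⟩ := hr
    calc (inner ℝ u' v' : ℝ) ≤ ‖u'‖ * ‖v'‖ := real_inner_le_norm _ _
      _ ≤ 1 * 1 := mul_le_mul hu1 hv1 (norm_nonneg _) zero_le_one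
      _ = 1 := one_mul 1
  have : θ ≤ thetaBar (limNormalCone A w) (limNormalCone B w) := by
    have h1 : θ ≤ (inner ℝ U (-V) : ℝ) := by
      rw [inner_neg_right]
      linarith
    exact h1.trans (le_csSup hbdd hmem)
  linarith
end

section
/- Let A and B be closed convex subsets of a Euclidean space with ri A ∩ ri B ≠ ∅, and let L := aff(A ∪ B) and T := (1/2)(Id + R_B R_A) the (single-valued) Douglas–Rachford operator. Then L ∩ Fix T = A ∩ B. -/
open Metric Filter
open scoped Topology

variable {X : Type*} [NormedAddCommGroup X] [InnerProductSpace ℝ X] [FiniteDimensional ℝ X]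

lemma proj_inner_le {C : Set X} (hC : Convex ℝ C) {x a : X} (ha : a ∈ projSet C x) :
    ∀ c ∈ C, (inner ℝ (x - a) (c - a) : ℝ) ≤ 0 := by
  obtain ⟨haC, hmin⟩ := ha
  have hne : Nonempty C := ⟨⟨a, haC⟩⟩
  have heq : ‖x - a‖ = ⨅ w : C, ‖x - w‖ := by
    refine le_antisymm (le_ciInf fun w => hmin w w.2) ?_
    exact ciInf_le (f := fun w : C => ‖x - w‖) ⟨0, by rintro r ⟨w, rfl⟩; exact norm_nonneg _⟩ ⟨a, haC⟩
  exact (norm_eq_iInf_iff_real_inner_le_zero hC haC).mp heq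

lemma ri_extend {A : Set X} {w c : X} (hw : w ∈ intrinsicInterior ℝ A) (hc : c ∈ A) :
    ∃ t : ℝ, 0 < t ∧ w + t • (w - c) ∈ A := by
  rw [mem_intrinsicInterior] at hw
  obtain ⟨y, hy, hyw⟩ := hw
  have hwA : w ∈ affineSpan ℝ A := hyw ▸ y.2
  have hcA : c ∈ affineSpan ℝ A := subset_affineSpan ℝ A hc
  have hmem : ∀ t : ℝ, w + t • (w - c) ∈ affineSpan ℝ A := by
    intro t
    have := AffineSubspace.smul_vsub_vadd_mem (affineSpan ℝ A) t hwA hcA hwA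
    simpa [vsub_eq_sub, vadd_eq_add, add_comm] using this
  set g : ℝ → affineSpan ℝ A := fun t => ⟨w + t • (w - c), hmem t⟩ with hg
  have hgc : Continuous g := by
    apply Continuous.subtype_mk
    continuity
  have hg0 : g 0 = y := by
    apply Subtype.ext
    simp [hg, hyw]
  have : ∀ᶠ t in 𝓝 (0:ℝ), g t ∈ interior ((↑) ⁻¹' A : Set <| affineSpan ℝ A) := by
    have : g ⁻¹' interior ((↑) ⁻¹' A) ∈ 𝓝 (0:ℝ) := by
      apply hgc.continuousAt.preimage_mem_nhds
      exact isOpen_interior.mem_nhds (hg0 ▸ hy)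
    exact this
  obtain ⟨ε, hε, hball⟩ := Metric.eventually_nhds_iff.mp this
  refine ⟨ε / 2, by positivity, ?_⟩
  have h2 := hball (y := ε / 2)
    (by rw [Real.dist_eq, sub_zero, abs_of_pos (by positivity)]; linarith)
  have h3 : g (ε / 2) ∈ ((↑) ⁻¹' A : Set <| affineSpan ℝ A) :=
    interior_subset h2
  exact h3

theorem affine_hull_inter_fixedPoints_eq_inter
    (A B : Set X) (hAc : IsClosed A) (hBc : IsClosed B)
    (hAcv : Convex ℝ A) (hBcv : Convex ℝ B)
    (hAne : A.Nonempty) (hBne : B.Nonempty)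
    (hri : (intrinsicInterior ℝ A ∩ intrinsicInterior ℝ B).Nonempty)
    (PA PB : X → X) (hPA : ∀ x, projSet A x = {PA x}) (hPB : ∀ x, projSet B x = {PB x})
    (T : X → X) (hT : ∀ x, T x = PB ((2:ℝ) • PA x - x) + x - PA x) :
    ((affineSpan ℝ (A ∪ B) : AffineSubspace ℝ X) : Set X) ∩ {x | T x = x} = A ∩ B := by
  obtain ⟨w, hwA, hwB⟩ := hri
  have hwA' : w ∈ A := intrinsicInterior_subset hwA
  have hwB' : w ∈ B := intrinsicInterior_subset hwB
  ext x
  constructor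
  · rintro ⟨hxL, hxfix⟩
    simp only [Set.mem_setOf_eq] at hxfix
    set a := PA x with ha_def
    have haA : a ∈ projSet A x := by rw [hPA]; exact rfl
    have h := (hT x).symm.trans hxfix
    rw [add_sub_assoc] at h
    have hb : PB ((2:ℝ) • a - x) = a := by
      have := eq_sub_of_add_eq h
      simpa using this
    have haB : a ∈ projSet B ((2:ℝ) • a - x) := by rw [hPB, hb]; exact rfl
    set v := x - a with hv_def
    have hA : ∀ c ∈ A, (inner ℝ v (c - a) : ℝ) ≤ 0 := proj_inner_le hAcv haA
    have hB : ∀ c ∈ B, (0:ℝ) ≤ inner ℝ v (c - a) := by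
      intro c hc
      have := proj_inner_le hBcv haB c hc
      have h2 : ((2:ℝ) • a - x) - a = -v := by
        rw [two_smul]; simp [hv_def]; abel
      rw [h2, inner_neg_left] at this
      linarith
    have hvwa : (inner ℝ v (w - a) : ℝ) = 0 := le_antisymm (hA w hwA') (hB w hwB')
    have claimA : ∀ c ∈ A, (inner ℝ v (c - w) : ℝ) = 0 := by
      intro c hc
      have h1 : (inner ℝ v (c - w) : ℝ) ≤ 0 := by
        have h3 := hA c hc
        have : (inner ℝ v (c - w) : ℝ) = inner ℝ v (c - a) - inner ℝ v (w - a) := by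
          rw [← inner_sub_right]; congr 1; abel
        rw [this, hvwa]; linarith
      obtain ⟨t, ht, hmem⟩ := ri_extend hwA hc
      have h4 := hA _ hmem
      have h5 : (inner ℝ v ((w + t • (w - c)) - a) : ℝ)
          = inner ℝ v (w - a) + t * inner ℝ v (w - c) := by
        rw [show (w + t • (w - c)) - a = (w - a) + t • (w - c) by abel,
          inner_add_right, real_inner_smul_right]
      rw [h5, hvwa, zero_add] at h4
      have h6 : (inner ℝ v (w - c) : ℝ) ≤ 0 := by by_contra hcon; push_neg at hcon; nlinarith
      have h7 : (inner ℝ v (c - w) : ℝ) = - inner ℝ v (w - c) := by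
        rw [show c - w = -(w - c) by abel, inner_neg_right]
      linarith [h7 ▸ h1]
    have claimB : ∀ c ∈ B, (inner ℝ v (c - w) : ℝ) = 0 := by
      intro c hc
      have h1 : (0:ℝ) ≤ inner ℝ v (c - w) := by
        have h3 := hB c hc
        have : (inner ℝ v (c - w) : ℝ) = inner ℝ v (c - a) - inner ℝ v (w - a) := by
          rw [← inner_sub_right]; congr 1; abel
        rw [this, hvwa]; linarith
      obtain ⟨t, ht, hmem⟩ := ri_extend hwB hc
      have h4 := hB _ hmem
      have h5 : (inner ℝ v ((w + t • (w - c)) - a) : ℝ)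
          = inner ℝ v (w - a) + t * inner ℝ v (w - c) := by
        rw [show (w + t • (w - c)) - a = (w - a) + t • (w - c) by abel,
          inner_add_right, real_inner_smul_right]
      rw [h5, hvwa, zero_add] at h4
      have h6 : (0:ℝ) ≤ inner ℝ v (w - c) := by by_contra hcon; push_neg at hcon; nlinarith
      have h7 : (inner ℝ v (c - w) : ℝ) = - inner ℝ v (w - c) := by
        rw [show c - w = -(w - c) by abel, inner_neg_right]
      linarith
    have hspan : ((affineSpan ℝ (A ∪ B) : AffineSubspace ℝ X) : Set X)
        ⊆ (AffineSubspace.mk' w ((ℝ ∙ v)ᗮ) : Set X) := by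
      apply affineSpan_le.mpr
      rintro c (hc | hc) <;>
      · rw [SetLike.mem_coe, AffineSubspace.mem_mk',
          Submodule.mem_orthogonal_singleton_iff_inner_right]
        first
        | exact claimA c hc
        | exact claimB c hc
    have hxw : (inner ℝ v (x - w) : ℝ) = 0 := by
      have := hspan hxL
      rw [SetLike.mem_coe, AffineSubspace.mem_mk',
        Submodule.mem_orthogonal_singleton_iff_inner_right] at this
      exact this
    have haw : (inner ℝ v (a - w) : ℝ) = 0 := claimA a haA.1
    have hvv : (inner ℝ v v : ℝ) = 0 := by
      have : (inner ℝ v v : ℝ) = inner ℝ v (x - w) - inner ℝ v (a - w) := by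
        rw [← inner_sub_right]; congr 1; rw [hv_def]; abel
      rw [this, hxw, haw]; ring
    have hxa : x = a := by
      have : v = 0 := inner_self_eq_zero.mp hvv
      have := sub_eq_zero.mp (hv_def ▸ this)
      exact this
    exact ⟨hxa ▸ haA.1, hxa ▸ haB.1⟩
  · rintro ⟨hxA, hxB⟩
    constructor
    · exact subset_affineSpan ℝ (A ∪ B) (Or.inl hxA)
    · have hxPA : PA x = x := by
        have : x ∈ projSet A x := ⟨hxA, fun c _ => by simp⟩
        rw [hPA] at this
        exact this.symm
      have hxPB : PB x = x := by
        have : x ∈ projSet B x := ⟨hxB, fun c _ => by simp⟩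
        rw [hPB] at this
        exact this.symm
      simp only [Set.mem_setOf_eq, hT, hxPA]
      rw [show (2:ℝ) • x - x = x by rw [two_smul]; abel, hxPB]
      abel
end

section
/- Let A and B be nonempty closed convex subsets of a Euclidean space with ri A ∩ ri B ≠ ∅, L := aff(A ∪ B), and T := (1/2)(Id + R_B R_A). Then for every starting point x₀ ∈ X, the Douglas–Rachford sequence xₙ₊₁ = T(xₙ) converges R-linearly to a fixed point x̄ of T, and P_A x̄ = P_B x̄ = x̄ − (x₀ − P_L x₀) ∈ A ∩ B. -/
open Metric Filter
open scoped Topology RealInnerProductSpace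
set_option linter.unusedSectionVars false
set_option linter.unusedVariables false
set_option maxHeartbeats 2000000

variable {X : Type*} [NormedAddCommGroup X] [InnerProductSpace ℝ X] [FiniteDimensional ℝ X]

lemma mem_projSet_iff {C : Set X} (hC : Convex ℝ C) {x a : X} :
    a ∈ projSet C x ↔ a ∈ C ∧ ∀ c ∈ C, ⟪x - a, c - a⟫ ≤ 0 := by
  constructor
  · rintro ⟨ha, hmin⟩
    refine ⟨ha, fun c hc => ?_⟩
    by_contra hpos
    push_neg at hpos
    set I : ℝ := ⟪x - a, c - a⟫ with hI
    have key : ∀ t : ℝ, 0 < t → t ≤ 1 → 2 * t * I ≤ t ^ 2 * ‖c - a‖ ^ 2 := by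
      intro t ht ht1
      have hmem : (1 - t) • a + t • c ∈ C := hC ha hc (by linarith) (le_of_lt ht) (by ring)
      have h1 : ‖x - a‖ ≤ ‖x - ((1 - t) • a + t • c)‖ := hmin _ hmem
      have h2 : x - ((1 - t) • a + t • c) = (x - a) - t • (c - a) := by
        rw [smul_sub, sub_smul]; simp [one_smul]; abel
      have h3 : ‖(x - a) - t • (c - a)‖ ^ 2
          = ‖x - a‖ ^ 2 - 2 * t * I + t ^ 2 * ‖c - a‖ ^ 2 := by
        rw [@norm_sub_sq_real, real_inner_smul_right, norm_smul]
        simp [abs_of_pos ht, mul_pow]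
        ring
      have h4 : ‖x - a‖ ^ 2 ≤ ‖(x - a) - t • (c - a)‖ ^ 2 := by
        rw [← h2]; exact pow_le_pow_left₀ (norm_nonneg _) h1 2
      nlinarith
    have hD : (0:ℝ) < ‖c - a‖ ^ 2 + 1 := by positivity
    set t : ℝ := min 1 (I / (‖c - a‖ ^ 2 + 1)) with htdef
    have ht0 : 0 < t := lt_min one_pos (div_pos hpos hD)
    have ht1 : t ≤ 1 := min_le_left _ _
    have h5 := key t ht0 ht1
    have h6 : t * ‖c - a‖ ^ 2 < 2 * I := by
      have h7 : t ≤ I / (‖c - a‖ ^ 2 + 1) := min_le_right _ _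
      have h8 : t * ‖c - a‖ ^ 2 ≤ (I / (‖c - a‖ ^ 2 + 1)) * ‖c - a‖ ^ 2 := by
        apply mul_le_mul_of_nonneg_right h7 (by positivity)
      have h9 : (I / (‖c - a‖ ^ 2 + 1)) * ‖c - a‖ ^ 2 < I := by
        rw [div_mul_eq_mul_div, div_lt_iff₀ hD]
        nlinarith
      linarith
    nlinarith
  · rintro ⟨ha, hinner⟩
    refine ⟨ha, fun c hc => ?_⟩
    have h1 : x - c = (x - a) - (c - a) := by abel
    have h2 : ‖x - c‖ ^ 2 = ‖x - a‖ ^ 2 - 2 * ⟪x - a, c - a⟫ + ‖c - a‖ ^ 2 := by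
      rw [h1, @norm_sub_sq_real]
    have h3 := hinner c hc
    nlinarith [norm_nonneg (x - c), norm_nonneg (x - a), sq_nonneg (‖c - a‖)]

section P
variable {C : Set X} {P : X → X}

lemma projP_spec (hC : Convex ℝ C) (hP : ∀ x, projSet C x = {P x}) (x : X) :
    P x ∈ C ∧ ∀ c ∈ C, ⟪x - P x, c - P x⟫ ≤ 0 := by
  have h : P x ∈ projSet C x := by rw [hP x]; rfl
  exact (mem_projSet_iff hC).1 h

lemma projP_eq (hC : Convex ℝ C) (hP : ∀ x, projSet C x = {P x}) {x a : X} (ha : a ∈ C)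
    (h : ∀ c ∈ C, ⟪x - a, c - a⟫ ≤ 0) : P x = a := by
  have hm : a ∈ projSet C x := (mem_projSet_iff hC).2 ⟨ha, h⟩
  rw [hP x] at hm
  exact hm.symm

lemma projP_mono (hC : Convex ℝ C) (hP : ∀ x, projSet C x = {P x}) (x y : X) :
    ‖P x - P y‖ ^ 2 ≤ ⟪x - y, P x - P y⟫ := by
  have h1 := (projP_spec hC hP x).2 (P y) (projP_spec hC hP y).1
  have h2 := (projP_spec hC hP y).2 (P x) (projP_spec hC hP x).1
  have hd : x - y = (x - P x) + (P x - P y) + (P y - y) := by abel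
  rw [hd, inner_add_left, inner_add_left, real_inner_self_eq_norm_sq]
  have e1 : ⟪x - P x, P x - P y⟫ = -⟪x - P x, P y - P x⟫ := by
    rw [← inner_neg_right, neg_sub]
  have e2 : ⟪P y - y, P x - P y⟫ = -⟪y - P y, P x - P y⟫ := by
    rw [← inner_neg_left, neg_sub]
  linarith

lemma projP_nonexp (hC : Convex ℝ C) (hP : ∀ x, projSet C x = {P x}) (x y : X) :
    ‖P x - P y‖ ≤ ‖x - y‖ := by
  have h := projP_mono hC hP x y
  have h2 : ⟪x - y, P x - P y⟫ ≤ ‖x - y‖ * ‖P x - P y‖ := real_inner_le_norm _ _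
  rcases le_or_gt ‖P x - P y‖ 0 with h3 | h3
  · exact le_trans h3 (norm_nonneg _)
  · nlinarith
end P

section T
variable {A B : Set X} {PA PB T : X → X}

lemma refl_nonexp {C : Set X} {P : X → X} (hC : Convex ℝ C) (hP : ∀ x, projSet C x = {P x})
    (x y : X) : ‖((2:ℝ) • P x - x) - ((2:ℝ) • P y - y)‖ ^ 2 ≤ ‖x - y‖ ^ 2 := by
  have hmono := projP_mono hC hP x y
  have hd : ((2:ℝ) • P x - x) - ((2:ℝ) • P y - y) = (2:ℝ) • (P x - P y) - (x - y) := by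
    module
  rw [hd, @norm_sub_sq_real, norm_smul, real_inner_smul_left]
  have hcomm : ⟪P x - P y, x - y⟫ = ⟪x - y, P x - P y⟫ := real_inner_comm _ _
  rw [Real.norm_eq_abs]
  have : |(2:ℝ)| = 2 := by norm_num
  rw [this]
  nlinarith

lemma T_firm (hAcv : Convex ℝ A) (hBcv : Convex ℝ B)
    (hPA : ∀ x, projSet A x = {PA x}) (hPB : ∀ x, projSet B x = {PB x})
    (hT : ∀ x, T x = PB ((2:ℝ) • PA x - x) + x - PA x) (x y : X) :
    ‖T x - T y‖ ^ 2 + ‖(x - T x) - (y - T y)‖ ^ 2 ≤ ‖x - y‖ ^ 2 := by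
  set Rx := (2:ℝ) • PA x - x with hRx
  set Ry := (2:ℝ) • PA y - y with hRy
  set Nx := (2:ℝ) • PB Rx - Rx with hNx
  set Ny := (2:ℝ) • PB Ry - Ry with hNy
  have step1 : ‖Rx - Ry‖ ^ 2 ≤ ‖x - y‖ ^ 2 := refl_nonexp hAcv hPA x y
  have step2 : ‖Nx - Ny‖ ^ 2 ≤ ‖Rx - Ry‖ ^ 2 := refl_nonexp hBcv hPB Rx Ry
  have hTx : T x - T y = (2⁻¹ : ℝ) • ((x - y) + (Nx - Ny)) := by
    rw [hT x, hT y, hNx, hNy, hRx, hRy]; module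
  have hTx2 : (x - T x) - (y - T y) = (2⁻¹ : ℝ) • ((x - y) - (Nx - Ny)) := by
    rw [hT x, hT y, hNx, hNy, hRx, hRy]; module
  rw [hTx, hTx2, norm_smul, norm_smul]
  have hpar := parallelogram_law_with_norm ℝ (x - y) (Nx - Ny)
  have h2 : ‖(2⁻¹:ℝ)‖ = 2⁻¹ := by rw [Real.norm_eq_abs]; norm_num
  rw [h2]
  nlinarith [sq_nonneg (‖x - y‖ - ‖Nx - Ny‖), norm_nonneg (x-y), norm_nonneg (Nx - Ny)]

lemma T_nonexp (hAcv : Convex ℝ A) (hBcv : Convex ℝ B)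
    (hPA : ∀ x, projSet A x = {PA x}) (hPB : ∀ x, projSet B x = {PB x})
    (hT : ∀ x, T x = PB ((2:ℝ) • PA x - x) + x - PA x) (x y : X) :
    ‖T x - T y‖ ≤ ‖x - y‖ := by
  have h := T_firm hAcv hBcv hPA hPB hT x y
  have h2 : ‖T x - T y‖ ^ 2 ≤ ‖x - y‖ ^ 2 := by nlinarith [sq_nonneg (‖(x - T x) - (y - T y)‖)]
  nlinarith [norm_nonneg (T x - T y), norm_nonneg (x - y)]
end T

lemma ri_ball {A : Set X} {z : X} (hz : z ∈ intrinsicInterior ℝ A) :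
    z ∈ A ∧ ∃ ρ > 0, ∀ w : X, w ∈ vectorSpan ℝ A → ‖w‖ ≤ ρ → z + w ∈ A := by
  obtain ⟨z', hz', rfl⟩ := hz
  have hzA : z' ∈ (Subtype.val ⁻¹' A : Set (affineSpan ℝ A)) := interior_subset hz'
  refine ⟨hzA, ?_⟩
  obtain ⟨ε, hε, hball⟩ := Metric.mem_nhds_iff.1 (mem_interior_iff_mem_nhds.1 hz')
  refine ⟨ε / 2, by linarith, fun w hw hwn => ?_⟩
  have hmem : (↑z' : X) + w ∈ affineSpan ℝ A := by
    have h1 : w +ᵥ (↑z' : X) ∈ affineSpan ℝ A :=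
      AffineSubspace.vadd_mem_of_mem_direction
        (by rw [direction_affineSpan]; exact hw) z'.2
    rwa [vadd_eq_add, add_comm] at h1
  have hq : (⟨(↑z' : X) + w, hmem⟩ : affineSpan ℝ A) ∈ Metric.ball z' ε := by
    rw [Metric.mem_ball, Subtype.dist_eq]
    simp only [dist_eq_norm, add_sub_cancel_left]
    linarith
  exact hball hq

lemma oP_inner_eq (K : Submodule ℝ X) (u w : X) (hw : w ∈ K) :
    ⟪(Submodule.orthogonalProjectionOnto K u : X), w⟫ = ⟪u, w⟫ := by
  have h : ⟪u - (Submodule.orthogonalProjectionOnto K u : X), w⟫ = 0 := Submodule.starProjection_inner_eq_zero u w hw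
  rw [inner_sub_left] at h
  linarith

lemma oP_norm_le (K : Submodule ℝ X) (u : X) : ‖(Submodule.orthogonalProjectionOnto K u : X)‖ ≤ ‖u‖ := by
  have h0 : ⟪u - (Submodule.orthogonalProjectionOnto K u : X), (Submodule.orthogonalProjectionOnto K u : X)⟫ = 0 :=
    Submodule.starProjection_inner_eq_zero (K := K) u _ (Submodule.orthogonalProjectionOnto K u).2
  have hd : u = (u - (Submodule.orthogonalProjectionOnto K u : X)) + (Submodule.orthogonalProjectionOnto K u : X) := by abel
  have h2 : ‖u‖ ^ 2 = ‖u - (Submodule.orthogonalProjectionOnto K u : X)‖ ^ 2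
      + ‖(Submodule.orthogonalProjectionOnto K u : X)‖ ^ 2 := by
    conv_lhs => rw [hd]
    rw [@norm_add_sq_real, h0]; ring
  nlinarith [norm_nonneg u, norm_nonneg (Submodule.orthogonalProjectionOnto K u : X),
    sq_nonneg ‖u - (Submodule.orthogonalProjectionOnto K u : X)‖]

lemma pair_bound (WA WB V : Submodule ℝ X) (hV : V ≤ WA ⊔ WB) :
    ∃ Ca : ℝ, 0 ≤ Ca ∧ ∀ p q : X, p ∈ WAᗮ ⊓ V → q ∈ WBᗮ ⊓ V →
      ‖p‖ ≤ Ca * ‖p + q‖ ∧ ‖q‖ ≤ Ca * ‖p + q‖ := by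
  set P1 := WAᗮ ⊓ V
  set P2 := WBᗮ ⊓ V
  set f : (↥P1 × ↥P2) →ₗ[ℝ] X := (P1.subtype).coprod (P2.subtype) with hf
  have hker : LinearMap.ker f = ⊥ := by
    rw [LinearMap.ker_eq_bot']
    rintro ⟨p, q⟩ hpq
    have hsum : (p : X) + (q : X) = 0 := hpq
    have hpV : (p : X) ∈ V := p.2.2
    have hpA : (p : X) ∈ WAᗮ := p.2.1
    have hqB : (q : X) ∈ WBᗮ := q.2.1
    have hpB : (p : X) ∈ WBᗮ := by
      have : (p : X) = -(q : X) := by linear_combination (norm := abel) hsum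
      rw [this]; exact neg_mem hqB
    have hp0 : (p : X) = 0 := by
      obtain ⟨wa, hwa, wb, hwb, hab⟩ := Submodule.mem_sup.1 (hV hpV)
      have h1 : ⟪wa, (p : X)⟫ = 0 := (Submodule.mem_orthogonal WA (p : X)).1 hpA wa hwa
      have h2 : ⟪wb, (p : X)⟫ = 0 := (Submodule.mem_orthogonal WB (p : X)).1 hpB wb hwb
      have h3 : ⟪(p : X), (p : X)⟫ = 0 := by
        rw [show (p : X) = wa + wb from hab.symm] at h1 h2 ⊢
        rw [inner_add_left, h1, h2]; ring
      exact inner_self_eq_zero.1 h3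
    have hq0 : (q : X) = 0 := by
      have : (q : X) = -(p : X) := by linear_combination (norm := abel) hsum
      rw [this, hp0, neg_zero]
    exact Prod.ext (Subtype.ext hp0) (Subtype.ext hq0)
  obtain ⟨K, hK0, hKf⟩ := f.exists_antilipschitzWith hker
  refine ⟨K, K.2, fun p q hp hq => ?_⟩
  have hd := hKf.le_mul_dist (⟨⟨p, hp⟩, ⟨q, hq⟩⟩ : ↥P1 × ↥P2) 0
  rw [map_zero] at hd
  have hfv : f (⟨⟨p, hp⟩, ⟨q, hq⟩⟩ : ↥P1 × ↥P2) = p + q := rfl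
  rw [hfv, dist_zero_right, dist_zero_right, Prod.norm_def] at hd
  have h1 : ‖(⟨p, hp⟩ : ↥P1)‖ = ‖p‖ := rfl
  have h2 : ‖(⟨q, hq⟩ : ↥P2)‖ = ‖q‖ := rfl
  simp only [Prod.fst, Prod.snd] at hd
  constructor
  · exact le_trans (le_trans (le_max_left ‖p‖ ‖q‖) (by rw [← h1, ← h2]; exact hd)) le_rfl
  · exact le_trans (le_trans (le_max_right ‖p‖ ‖q‖) (by rw [← h1, ← h2]; exact hd)) le_rfl

lemma inter_bound (WA WB : Submodule ℝ X) :
    ∃ Cb : ℝ, 0 ≤ Cb ∧ ∀ s : X, ∀ wa ∈ WA, ∀ wb ∈ WB, ∃ m ∈ WA ⊓ WB,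
      ‖s - m‖ ≤ Cb * (‖s - wa‖ + ‖s - wb‖) := by
  set E := (WA ⊓ WB)ᗮ
  set f : ↥E →ₗ[ℝ] (↥WAᗮ × ↥WBᗮ) :=
    (((Submodule.orthogonalProjectionOnto WAᗮ).toLinearMap.comp E.subtype).prod
      ((Submodule.orthogonalProjectionOnto WBᗮ).toLinearMap.comp E.subtype)) with hf
  have hker : LinearMap.ker f = ⊥ := by
    rw [LinearMap.ker_eq_bot']
    rintro ⟨r, hr⟩ hfr
    have h1 : Submodule.orthogonalProjectionOnto WAᗮ r = 0 := congrArg Prod.fst hfr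
    have h2 : Submodule.orthogonalProjectionOnto WBᗮ r = 0 := congrArg Prod.snd hfr
    have hrA : r ∈ WA := by
      have := Submodule.orthogonalProjectionOnto_eq_zero_iff.1 h1
      rwa [Submodule.orthogonal_orthogonal] at this
    have hrB : r ∈ WB := by
      have := Submodule.orthogonalProjectionOnto_eq_zero_iff.1 h2
      rwa [Submodule.orthogonal_orthogonal] at this
    have h3 : ⟪r, r⟫ = 0 := by
      have := (Submodule.mem_orthogonal (WA ⊓ WB) r).1 hr r ⟨hrA, hrB⟩
      exact this
    exact Subtype.ext (inner_self_eq_zero.1 h3)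
  obtain ⟨K, hK0, hKf⟩ := f.exists_antilipschitzWith hker
  refine ⟨K, K.2, fun s wa hwa wb hwb => ?_⟩
  set m : X := (Submodule.orthogonalProjectionOnto (WA ⊓ WB) s : X) with hm
  refine ⟨m, (Submodule.orthogonalProjectionOnto (WA ⊓ WB) s).2, ?_⟩
  have hrE : s - m ∈ E := Submodule.sub_starProjection_mem_orthogonal (K := WA ⊓ WB) s
  have hd := hKf.le_mul_dist (⟨s - m, hrE⟩ : ↥E) 0
  rw [map_zero, dist_zero_right, dist_zero_right] at hd
  have hns : ‖(⟨s - m, hrE⟩ : ↥E)‖ = ‖s - m‖ := rfl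
  rw [hns] at hd
  have hA0 : Submodule.orthogonalProjectionOnto WAᗮ (s - m) = Submodule.orthogonalProjectionOnto WAᗮ (s - wa) := by
    have hmem : (s - wa) - (s - m) ∈ WAᗮᗮ := by
      have h1 : (s - wa) - (s - m) = m - wa := by abel
      rw [h1]
      exact Submodule.le_orthogonal_orthogonal WA
        (sub_mem ((Submodule.orthogonalProjectionOnto (WA ⊓ WB) s).2.1) hwa)
    have := Submodule.orthogonalProjectionOnto_apply_of_mem_orthogonal hmem
    have h2 := map_sub (Submodule.orthogonalProjectionOnto WAᗮ) (s - wa) (s - m)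
    rw [this] at h2
    exact (sub_eq_zero.1 h2.symm).symm
  have hB0 : Submodule.orthogonalProjectionOnto WBᗮ (s - m) = Submodule.orthogonalProjectionOnto WBᗮ (s - wb) := by
    have hmem : (s - wb) - (s - m) ∈ WBᗮᗮ := by
      have h1 : (s - wb) - (s - m) = m - wb := by abel
      rw [h1]
      exact Submodule.le_orthogonal_orthogonal WB
        (sub_mem ((Submodule.orthogonalProjectionOnto (WA ⊓ WB) s).2.2) hwb)
    have := Submodule.orthogonalProjectionOnto_apply_of_mem_orthogonal hmem
    have h2 := map_sub (Submodule.orthogonalProjectionOnto WBᗮ) (s - wb) (s - m)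
    rw [this] at h2
    exact (sub_eq_zero.1 h2.symm).symm
  have hfval : ‖f (⟨s - m, hrE⟩ : ↥E)‖
      = max ‖(Submodule.orthogonalProjectionOnto WAᗮ (s - m) : X)‖ ‖(Submodule.orthogonalProjectionOnto WBᗮ (s - m) : X)‖ := by
    rw [Prod.norm_def]; rfl
  rw [hfval, hA0, hB0] at hd
  have hle1 : ‖(Submodule.orthogonalProjectionOnto WAᗮ (s - wa) : X)‖ ≤ ‖s - wa‖ := oP_norm_le _ _
  have hle2 : ‖(Submodule.orthogonalProjectionOnto WBᗮ (s - wb) : X)‖ ≤ ‖s - wb‖ := oP_norm_le _ _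
  have hmax : max ‖(Submodule.orthogonalProjectionOnto WAᗮ (s - wa) : X)‖ ‖(Submodule.orthogonalProjectionOnto WBᗮ (s - wb) : X)‖
      ≤ ‖s - wa‖ + ‖s - wb‖ := by
    apply max_le <;> [linarith [norm_nonneg (s - wb)]; linarith [norm_nonneg (s - wa)]]
  calc ‖s - m‖ ≤ (K : ℝ) * max ‖(Submodule.orthogonalProjectionOnto WAᗮ (s - wa) : X)‖
        ‖(Submodule.orthogonalProjectionOnto WBᗮ (s - wb) : X)‖ := hd
    _ ≤ K * (‖s - wa‖ + ‖s - wb‖) := by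
        apply mul_le_mul_of_nonneg_left hmax K.2

lemma error_bound' (A B : Set X) (hAcv : Convex ℝ A) (hBcv : Convex ℝ B)
    (PA PB PL T : X → X)
    (hPA : ∀ x, projSet A x = {PA x}) (hPB : ∀ x, projSet B x = {PB x})
    (hPL : ∀ x, projSet ((affineSpan ℝ (A ∪ B) : AffineSubspace ℝ X) : Set X) x = {PL x})
    (hT : ∀ x, T x = PB ((2:ℝ) • PA x - x) + x - PA x)
    (z : X) (ρ M : ℝ) (hzA : z ∈ A) (hzB : z ∈ B) (hρ : 0 < ρ) (hM0 : 0 ≤ M)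
    (hballA : ∀ w ∈ vectorSpan ℝ A, ‖w‖ ≤ ρ → z + w ∈ A)
    (hballB : ∀ w ∈ vectorSpan ℝ B, ‖w‖ ≤ ρ → z + w ∈ B) :
    ∃ c : ℝ, 1 ≤ c ∧ ∀ x : X, ‖x - z‖ ≤ M → ‖x - T x‖ ≤ 2 * M →
      Metric.infDist x {w : X | PL w ∈ A ∧ PL w ∈ B} ≤ c * ‖x - T x‖ := by
  classical
  set L : AffineSubspace ℝ X := affineSpan ℝ (A ∪ B) with hL
  set V : Submodule ℝ X := L.direction with hV
  set WA : Submodule ℝ X := vectorSpan ℝ A with hWA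
  set WB : Submodule ℝ X := vectorSpan ℝ B with hWB
  have hAL : A ⊆ (L : Set X) := fun a ha => subset_affineSpan ℝ _ (Set.mem_union_left _ ha)
  have hBL : B ⊆ (L : Set X) := fun b hb => subset_affineSpan ℝ _ (Set.mem_union_right _ hb)
  have hWAV : WA ≤ V := by
    rw [hV, hL, direction_affineSpan]
    exact vectorSpan_mono ℝ Set.subset_union_left
  have hWBV : WB ≤ V := by
    rw [hV, hL, direction_affineSpan]
    exact vectorSpan_mono ℝ Set.subset_union_right
  have hVle : V ≤ WA ⊔ WB := by
    rw [hV, hL, direction_affineSpan,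
      vectorSpan_eq_span_vsub_set_right ℝ (Set.mem_union_left _ hzA)]
    rw [Submodule.span_le]
    rintro _ ⟨c, hc, rfl⟩
    rcases hc with hcA | hcB
    · exact Submodule.mem_sup_left (vsub_mem_vectorSpan ℝ hcA hzA)
    · exact Submodule.mem_sup_right (vsub_mem_vectorSpan ℝ hcB hzB)
  have hLcv : Convex ℝ (L : Set X) := L.convex
  obtain ⟨Ca, hCa0, hCab⟩ := pair_bound WA WB V hVle
  obtain ⟨Cb, hCb0, hCbb⟩ := inter_bound WA WB
  set K : ℝ := M / ρ with hK
  have hK0 : 0 ≤ K := div_nonneg hM0 (le_of_lt hρ)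
  set C₁ : ℝ := Ca * (1 + 2 * K) + K with hC₁
  have hC₁0 : 0 ≤ C₁ := by positivity
  set C₃ : ℝ := Cb * (2 * C₁ + 1) with hC₃
  have hC₃0 : 0 ≤ C₃ := by positivity
  set C₄ : ℝ := C₃ + C₁ + 1 with hC₄
  have hC₄0 : 0 ≤ C₄ := by positivity
  set M₂ : ℝ := (C₁ + C₃) * (2 * M) + M with hM₂
  have hM₂0 : 0 ≤ M₂ := by positivity
  set C₅ : ℝ := C₃ + C₄ * M₂ / ρ with hC₅
  have hC₅0 : 0 ≤ C₅ := by positivity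
  refine ⟨max 1 C₅, le_max_left _ _, fun x hxM hx2M => ?_⟩
  set a' : X := PA x with ha'
  set b' : X := PB ((2:ℝ) • a' - x) with hb'
  have hTx : x - T x = a' - b' := by rw [hT x, ← ha', ← hb']; abel
  set ε : ℝ := ‖a' - b'‖ with hε
  have hε0 : (0:ℝ) ≤ ε := norm_nonneg _
  have hε2M : ε ≤ 2 * M := by rw [hε, ← hTx]; exact hx2M
  have ha'A : a' ∈ A := (projP_spec hAcv hPA x).1
  have hb'B : b' ∈ B := (projP_spec hBcv hPB _).1
  set u : X := x - a' with hu
  set v : X := ((2:ℝ) • a' - x) - b' with hv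
  have huv : u + v = a' - b' := by rw [hu, hv]; module
  have huN : ∀ c ∈ A, ⟪u, c - a'⟫ ≤ 0 := (projP_spec hAcv hPA x).2
  have hvN : ∀ c ∈ B, ⟪v, c - b'⟫ ≤ 0 := (projP_spec hBcv hPB _).2
  -- key identity
  have hkey : ⟪u, z - a'⟫ + ⟪v, z - b'⟫ = ⟪u + v, z - x⟫ + ε ^ 2 := by
    have e1 : z - a' = (z - x) + u := by rw [hu]; abel
    have e2 : z - b' = (z - x) + (2:ℝ) • u + v := by rw [hu, hv]; module
    rw [e1, e2]
    have e3 : ε ^ 2 = ⟪u + v, u + v⟫ := by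
      rw [← huv] at hε; rw [hε, real_inner_self_eq_norm_sq]
    rw [e3]
    simp only [inner_add_left, inner_add_right, real_inner_smul_right]
    have hc : ⟪v, u⟫ = ⟪u, v⟫ := real_inner_comm u v
    linarith [hc]
  have hCS : -⟪u + v, z - x⟫ ≤ ε * M := by
    have h1 := abs_real_inner_le_norm (u + v) (z - x)
    have h2 : ‖z - x‖ ≤ M := by rw [norm_sub_rev]; exact hxM
    have h3 : ‖u + v‖ = ε := by rw [huv, hε]
    have h4 : -⟪u + v, z - x⟫ ≤ |⟪u + v, z - x⟫| := neg_le_abs _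
    calc -⟪u + v, z - x⟫ ≤ ‖u + v‖ * ‖z - x‖ := le_trans h4 h1
      _ ≤ ε * M := by rw [h3]; exact mul_le_mul_of_nonneg_left h2 hε0
  have hsum : (-⟪u, z - a'⟫) + (-⟪v, z - b'⟫) ≤ ε * M := by
    nlinarith [sq_nonneg ε]
  have huzA : ⟪u, z - a'⟫ ≤ 0 := huN z hzA
  have hvzB : ⟪v, z - b'⟫ ≤ 0 := hvN z hzB
  -- bounds on tangential components of the normals
  have hprojbd : ∀ (W : Submodule ℝ X) (S : Set X) (t d : X), (∀ w ∈ W, ‖w‖ ≤ ρ → z + w ∈ S) →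
      (∀ c ∈ S, ⟪t, c - d⟫ ≤ 0) → z ∈ S →
      ρ * ‖(Submodule.orthogonalProjectionOnto W t : X)‖ ≤ -⟪t, z - d⟫ := by
    intro W S t d hball hN hzS
    set pt : X := (Submodule.orthogonalProjectionOnto W t : X) with hpt
    have hzd : ⟪t, z - d⟫ ≤ 0 := hN z hzS
    rcases eq_or_ne pt 0 with h0 | h0
    · rw [h0, norm_zero, mul_zero]; linarith
    · have hptn : (0:ℝ) < ‖pt‖ := norm_pos_iff.2 h0
      set w0 : X := (ρ / ‖pt‖) • pt with hw0
      have hw0W : w0 ∈ W := Submodule.smul_mem _ _ (SetLike.coe_mem _)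
      have hw0n : ‖w0‖ = ρ := by
        rw [hw0, norm_smul, Real.norm_eq_abs, abs_of_pos (div_pos hρ hptn),
          div_mul_cancel₀ _ (ne_of_gt hptn)]
      have h1 := hN _ (hball w0 hw0W (le_of_eq hw0n))
      have h2 : z + w0 - d = (z - d) + w0 := by abel
      rw [h2, inner_add_right] at h1
      have h3 : ⟪t, w0⟫ = ρ * ‖pt‖ := by
        rw [hw0, real_inner_smul_right]
        have h4 : ⟪pt, pt⟫ = ⟪t, pt⟫ := oP_inner_eq W t pt (SetLike.coe_mem _)
        have h5 : ⟪t, pt⟫ = ‖pt‖ ^ 2 := by rw [← h4, real_inner_self_eq_norm_sq]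
        rw [h5]
        field_simp
      linarith
  have hPWA : ρ * ‖(Submodule.orthogonalProjectionOnto WA u : X)‖ ≤ -⟪u, z - a'⟫ :=
    hprojbd WA A u a' hballA huN hzA
  have hPWB : ρ * ‖(Submodule.orthogonalProjectionOnto WB v : X)‖ ≤ -⟪v, z - b'⟫ :=
    hprojbd WB B v b' hballB hvN hzB
  have hKA : ‖(Submodule.orthogonalProjectionOnto WA u : X)‖ ≤ K * ε := by
    rw [hK, div_mul_eq_mul_div, le_div_iff₀ hρ]
    linarith [hPWA, hsum, hvzB, huzA]
  have hKB : ‖(Submodule.orthogonalProjectionOnto WB v : X)‖ ≤ K * ε := by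
    rw [hK, div_mul_eq_mul_div, le_div_iff₀ hρ]
    linarith [hPWB, hsum, hvzB, huzA]
  set pu : X := (Submodule.orthogonalProjectionOnto WA u : X) with hpu
  set pv : X := (Submodule.orthogonalProjectionOnto WB v : X) with hpv
  set Pu : X := (Submodule.orthogonalProjectionOnto V u : X) with hPuD
  set Pv : X := (Submodule.orthogonalProjectionOnto V v : X) with hPvD
  have hcomp : ∀ (W : Submodule ℝ X), W ≤ V → ∀ t : X,
      ((Submodule.orthogonalProjectionOnto V t : X) - (Submodule.orthogonalProjectionOnto W t : X)) ∈ Wᗮ ⊓ V := by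
    intro W hWV t
    rw [Submodule.mem_inf]
    refine ⟨?_, sub_mem (SetLike.coe_mem _) (hWV (SetLike.coe_mem _))⟩
    rw [Submodule.mem_orthogonal]
    intro w hw
    have h1 : ⟪(Submodule.orthogonalProjectionOnto V t : X), w⟫ = ⟪t, w⟫ := oP_inner_eq V t w (hWV hw)
    have h2 : ⟪(Submodule.orthogonalProjectionOnto W t : X), w⟫ = ⟪t, w⟫ := oP_inner_eq W t w hw
    have h3 : ⟪(Submodule.orthogonalProjectionOnto V t : X) - (Submodule.orthogonalProjectionOnto W t : X), w⟫ = 0 := by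
      rw [inner_sub_left, h1, h2, sub_self]
    exact (real_inner_comm _ _).trans h3
  have hpmem : Pu - pu ∈ WAᗮ ⊓ V := hcomp WA hWAV u
  have hqmem : Pv - pv ∈ WBᗮ ⊓ V := hcomp WB hWBV v
  have ha'b'V : a' - b' ∈ V := by
    have h := AffineSubspace.vsub_mem_direction (hAL ha'A) (hBL hb'B)
    rwa [vsub_eq_sub] at h
  have hPVuv : Pu + Pv = u + v := by
    have h1 : ((Submodule.orthogonalProjectionOnto V (u + v) : X)) = u + v :=
      Submodule.starProjection_eq_self_iff.2 (by rw [huv]; exact ha'b'V)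
    have h2 : Submodule.orthogonalProjectionOnto V (u + v)
        = Submodule.orthogonalProjectionOnto V u + Submodule.orthogonalProjectionOnto V v := map_add _ _ _
    rw [h2, Submodule.coe_add] at h1
    exact h1
  have hpq : (Pu - pu) + (Pv - pv) = (u + v) - pu - pv := by rw [← hPVuv]; abel
  have huvε : ‖u + v‖ = ε := by rw [huv, hε]
  have hpqn : ‖(Pu - pu) + (Pv - pv)‖ ≤ (1 + 2 * K) * ε := by
    rw [hpq]
    calc ‖(u + v) - pu - pv‖ ≤ ‖(u + v) - pu‖ + ‖pv‖ := norm_sub_le _ _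
      _ ≤ ‖u + v‖ + ‖pu‖ + ‖pv‖ := by linarith [norm_sub_le (u + v) pu]
      _ ≤ ε + K * ε + K * ε := by rw [huvε]; linarith [hKA, hKB]
      _ = (1 + 2 * K) * ε := by ring
  obtain ⟨hpb, hqb⟩ := hCab _ _ hpmem hqmem
  have hPu : ‖Pu‖ ≤ C₁ * ε := by
    have h1 : ‖Pu‖ ≤ ‖Pu - pu‖ + ‖pu‖ := by
      calc ‖Pu‖ = ‖(Pu - pu) + pu‖ := by rw [sub_add_cancel]
        _ ≤ ‖Pu - pu‖ + ‖pu‖ := norm_add_le _ _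
    have h2 : ‖Pu - pu‖ ≤ Ca * ((1 + 2 * K) * ε) :=
      le_trans hpb (mul_le_mul_of_nonneg_left hpqn hCa0)
    rw [hC₁]; nlinarith [hKA]
  have hPv : ‖Pv‖ ≤ C₁ * ε := by
    have h1 : ‖Pv‖ ≤ ‖Pv - pv‖ + ‖pv‖ := by
      calc ‖Pv‖ = ‖(Pv - pv) + pv‖ := by rw [sub_add_cancel]
        _ ≤ ‖Pv - pv‖ + ‖pv‖ := norm_add_le _ _
    have h2 : ‖Pv - pv‖ ≤ Ca * ((1 + 2 * K) * ε) :=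
      le_trans hqb (mul_le_mul_of_nonneg_left hpqn hCa0)
    rw [hC₁]; nlinarith [hKB]
  -- the point y in L close to both sets
  set y : X := a' + Pu with hy
  have hya : ‖y - a'‖ ≤ C₁ * ε := by rw [hy, add_sub_cancel_left]; exact hPu
  have hyb : ‖y - b'‖ ≤ (C₁ + 1) * ε := by
    have h1 : y - b' = Pu + (a' - b') := by rw [hy]; abel
    rw [h1]
    calc ‖Pu + (a' - b')‖ ≤ ‖Pu‖ + ‖a' - b'‖ := norm_add_le _ _
      _ ≤ C₁ * ε + ε := by rw [← hε]; linarith [hPu]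
      _ = (C₁ + 1) * ε := by ring
  -- find a common point of the affine hulls near y
  have hwaWA : a' - z ∈ WA := by
    have h := vsub_mem_vectorSpan ℝ ha'A hzA
    rwa [vsub_eq_sub, ← hWA] at h
  have hwbWB : b' - z ∈ WB := by
    have h := vsub_mem_vectorSpan ℝ hb'B hzB
    rwa [vsub_eq_sub, ← hWB] at h
  obtain ⟨m0, hm0, hm0b⟩ := hCbb (y - z) (a' - z) hwaWA (b' - z) hwbWB
  have hswa : (y - z) - (a' - z) = y - a' := by abel
  have hswb : (y - z) - (b' - z) = y - b' := by abel
  rw [hswa, hswb] at hm0b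
  have hm0n : ‖(y - z) - m0‖ ≤ C₃ * ε := by
    rw [hC₃]
    calc ‖(y - z) - m0‖ ≤ Cb * (‖y - a'‖ + ‖y - b'‖) := hm0b
      _ ≤ Cb * (C₁ * ε + (C₁ + 1) * ε) := by
          apply mul_le_mul_of_nonneg_left _ hCb0; linarith
      _ = Cb * (2 * C₁ + 1) * ε := by ring
  set m : X := z + m0 with hm
  have hym : ‖y - m‖ ≤ C₃ * ε := by
    have h1 : y - m = (y - z) - m0 := by rw [hm]; abel
    rw [h1]; exact hm0n
  have hma : ‖m - a'‖ ≤ C₄ * ε := by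
    have h1 : m - a' = (m - y) + (y - a') := by abel
    rw [h1]
    calc ‖(m - y) + (y - a')‖ ≤ ‖m - y‖ + ‖y - a'‖ := norm_add_le _ _
      _ ≤ C₃ * ε + C₁ * ε := by rw [norm_sub_rev]; linarith
      _ ≤ C₄ * ε := by rw [hC₄]; nlinarith
  have hmb : ‖m - b'‖ ≤ C₄ * ε := by
    have h1 : m - b' = (m - y) + (y - b') := by abel
    rw [h1]
    calc ‖(m - y) + (y - b')‖ ≤ ‖m - y‖ + ‖y - b'‖ := norm_add_le _ _
      _ ≤ C₃ * ε + (C₁ + 1) * ε := by rw [norm_sub_rev]; linarith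
      _ = C₄ * ε := by rw [hC₄]; ring
  have hmaWA : m - a' ∈ WA := by
    have h1 : m - a' = m0 - (a' - z) := by rw [hm]; abel
    rw [h1]; exact sub_mem hm0.1 hwaWA
  have hmbWB : m - b' ∈ WB := by
    have h1 : m - b' = m0 - (b' - z) := by rw [hm]; abel
    rw [h1]; exact sub_mem hm0.2 hwbWB
  set H : ℝ := max ‖m - a'‖ ‖m - b'‖ with hH
  have hH0 : 0 ≤ H := le_trans (norm_nonneg _) (le_max_left _ _)
  have hHC4 : H ≤ C₄ * ε := max_le hma hmb
  -- construct a common point c of A and B near y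
  have hc : ∃ c, c ∈ A ∧ c ∈ B ∧ ‖y - c‖ ≤ C₃ * ε + (C₄ * ε / ρ) * ‖z - m‖ := by
    rcases eq_or_lt_of_le hH0 with hHz | hHpos
    · -- H = 0 : m itself is in A ∩ B
      have h1 : ‖m - a'‖ ≤ H := le_max_left _ _
      have h2 : ‖m - b'‖ ≤ H := le_max_right _ _
      rw [← hHz] at h1 h2
      have hmeqa : m = a' := norm_sub_eq_zero_iff.1 (le_antisymm h1 (norm_nonneg _))
      have hmeqb : m = b' := norm_sub_eq_zero_iff.1 (le_antisymm h2 (norm_nonneg _))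
      refine ⟨m, by rw [hmeqa]; exact ha'A, by rw [hmeqb]; exact hb'B, ?_⟩
      have h2 : (0:ℝ) ≤ (C₄ * ε / ρ) * ‖z - m‖ := by positivity
      linarith [hym]
    · -- H > 0
      set t : ℝ := H / (H + ρ) with ht
      have hHρ : 0 < H + ρ := by linarith
      have ht0 : 0 < t := div_pos hHpos hHρ
      have ht1 : t < 1 := (div_lt_one hHρ).2 (by linarith)
      have htne : t ≠ 0 := ne_of_gt ht0
      have h1t : 1 - t = ρ / (H + ρ) := by
        rw [ht]; field_simp; ring
      have hHne : H ≠ 0 := ne_of_gt hHpos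
      have hHρne : H + ρ ≠ 0 := ne_of_gt hHρ
      have h1tt : (1 - t) / t = ρ / H := by
        rw [h1t, ht]; field_simp
      set c : X := m + t • (z - m) with hcdef
      have hgen : ∀ (S : Set X) (W : Submodule ℝ X) (d : X), Convex ℝ S → d ∈ S →
          (∀ w ∈ W, ‖w‖ ≤ ρ → z + w ∈ S) → (m - d ∈ W) → ‖m - d‖ ≤ H → c ∈ S := by
        intro S W d hScv hdS hball hmd hmdH
        set wS : X := z + ((1 - t) / t) • (m - d) with hwS
        have hwSmem : wS ∈ S := by
          apply hball _ (Submodule.smul_mem _ _ hmd)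
          rw [norm_smul, Real.norm_eq_abs, h1tt, abs_of_pos (div_pos hρ hHpos)]
          calc ρ / H * ‖m - d‖ ≤ ρ / H * H := by
                exact mul_le_mul_of_nonneg_left hmdH (le_of_lt (div_pos hρ hHpos))
            _ = ρ := div_mul_cancel₀ _ hHne
        have hsm : t • (((1 - t) / t) • (m - d)) = (1 - t) • (m - d) := by
          rw [smul_smul, mul_comm, div_mul_cancel₀ _ htne]
        have hcomb : (1 - t) • d + t • wS = c := by
          rw [hwS, smul_add, hsm, hcdef]
          module
        have hmem : (1 - t) • d + t • wS ∈ S :=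
          hScv hdS hwSmem (by linarith) (le_of_lt ht0) (by ring)
        rwa [hcomb] at hmem
      have hcA : c ∈ A := hgen A WA a' hAcv ha'A hballA hmaWA (le_max_left _ _)
      have hcB : c ∈ B := hgen B WB b' hBcv hb'B hballB hmbWB (le_max_right _ _)
      refine ⟨c, hcA, hcB, ?_⟩
      have h1 : y - c = (y - m) - t • (z - m) := by rw [hcdef]; abel
      have h2 : ‖y - c‖ ≤ ‖y - m‖ + t * ‖z - m‖ := by
        rw [h1]
        calc ‖(y - m) - t • (z - m)‖ ≤ ‖y - m‖ + ‖t • (z - m)‖ := norm_sub_le _ _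
          _ = ‖y - m‖ + t * ‖z - m‖ := by rw [norm_smul, Real.norm_eq_abs, abs_of_pos ht0]
      have h4 : t ≤ H / ρ := by
        rw [ht]; gcongr; linarith
      have h5 : H / ρ ≤ C₄ * ε / ρ := by gcongr
      have h6 : t * ‖z - m‖ ≤ (C₄ * ε / ρ) * ‖z - m‖ :=
        mul_le_mul_of_nonneg_right (by linarith) (norm_nonneg _)
      linarith [hym]
  obtain ⟨c, hcA, hcB, hyc⟩ := hc
  have hzm : ‖z - m‖ ≤ M₂ := by
    have h1 : ‖z - m‖ = ‖m0‖ := by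
      rw [hm, show z - (z + m0) = -m0 by abel, norm_neg]
    have h2 : ‖m0‖ ≤ ‖(y - z) - m0‖ + ‖y - z‖ := by
      calc ‖m0‖ = ‖((y - z) - ((y - z) - m0))‖ := by rw [show (y - z) - ((y - z) - m0) = m0 by abel]
        _ ≤ ‖y - z‖ + ‖(y - z) - m0‖ := norm_sub_le _ _
        _ = ‖(y - z) - m0‖ + ‖y - z‖ := by ring
    have hza' : ‖a' - z‖ ≤ M := by
      have hPAz : PA z = z := projP_eq hAcv hPA hzA (fun c₂ hc₂ => by simp)
      have h3 := projP_nonexp hAcv hPA x z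
      rw [hPAz, ← ha'] at h3
      exact le_trans h3 hxM
    have hyz : ‖y - z‖ ≤ C₁ * ε + M := by
      calc ‖y - z‖ = ‖(y - a') + (a' - z)‖ := by rw [show (y - a') + (a' - z) = y - z by abel]
        _ ≤ ‖y - a'‖ + ‖a' - z‖ := norm_add_le _ _
        _ ≤ C₁ * ε + M := by linarith
    have h7 : (C₁ + C₃) * ε ≤ (C₁ + C₃) * (2 * M) := by
      apply mul_le_mul_of_nonneg_left hε2M (by positivity)
    rw [h1, hM₂]
    linarith [hm0n, h2, hyz, h7]
  have hfinal : ‖y - c‖ ≤ C₅ * ε := by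
    have h1 : (C₄ * ε / ρ) * ‖z - m‖ ≤ (C₄ * ε / ρ) * M₂ :=
      mul_le_mul_of_nonneg_left hzm (by positivity)
    have h2 : (C₄ * ε / ρ) * M₂ = (C₄ * M₂ / ρ) * ε := by ring
    rw [hC₅]
    linarith [hyc, h1, h2]
  set g : X := c + (x - y) with hg
  have hxyV : x - y ∈ Vᗮ := by
    have h1 : x - y = u - Pu := by rw [hy, hu]; abel
    rw [h1, hPuD]
    exact Submodule.sub_starProjection_mem_orthogonal (K := V) u
  have hPLg : PL g = c := by
    apply projP_eq hLcv hPL (hAL hcA)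
    intro c' hc'
    have h1 : g - c = x - y := by rw [hg]; abel
    rw [h1]
    have h2 : c' - c ∈ V := by
      have h3 := AffineSubspace.vsub_mem_direction hc' (hAL hcA)
      rwa [vsub_eq_sub] at h3
    have h3 := (Submodule.mem_orthogonal V (x - y)).1 hxyV (c' - c) h2
    exact le_of_eq ((real_inner_comm _ _).trans h3)
  have hgmem : g ∈ {w : X | PL w ∈ A ∧ PL w ∈ B} := by
    rw [Set.mem_setOf_eq, hPLg]; exact ⟨hcA, hcB⟩
  have hdist : dist x g = ‖y - c‖ := by
    rw [dist_eq_norm, hg, show x - (c + (x - y)) = y - c by abel]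
  calc Metric.infDist x {w : X | PL w ∈ A ∧ PL w ∈ B} ≤ dist x g :=
        Metric.infDist_le_dist_of_mem hgmem
    _ = ‖y - c‖ := hdist
    _ ≤ C₅ * ε := hfinal
    _ ≤ (max 1 C₅) * ε := mul_le_mul_of_nonneg_right (le_max_right _ _) hε0
    _ = (max 1 C₅) * ‖x - T x‖ := by rw [hTx, ← hε]

theorem DR_global_linear_convergence_convex
    (A B : Set X) (hAc : IsClosed A) (hBc : IsClosed B)
    (hAcv : Convex ℝ A) (hBcv : Convex ℝ B)
    (hAne : A.Nonempty) (hBne : B.Nonempty)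
    (hri : (intrinsicInterior ℝ A ∩ intrinsicInterior ℝ B).Nonempty)
    (PA PB PL : X → X) (hPA : ∀ x, projSet A x = {PA x}) (hPB : ∀ x, projSet B x = {PB x})
    (hPL : ∀ x, projSet ((affineSpan ℝ (A ∪ B) : AffineSubspace ℝ X) : Set X) x = {PL x})
    (T : X → X) (hT : ∀ x, T x = PB ((2:ℝ) • PA x - x) + x - PA x)
    (x₀ : X) (xs : ℕ → X) (hx0 : xs 0 = x₀) (hiter : ∀ n, xs (n + 1) = T (xs n)) :
    ∃ xbar : X, T xbar = xbar ∧
      (∃ C : ℝ, 0 ≤ C ∧ ∃ κ ∈ Set.Ico (0:ℝ) 1, ∀ n, ‖xs n - xbar‖ ≤ C * κ ^ n) ∧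
      Tendsto xs atTop (𝓝 xbar) ∧
      PA xbar = PB xbar ∧ PA xbar = xbar - (x₀ - PL x₀) ∧ PA xbar ∈ A ∩ B := by
  classical
  obtain ⟨z, hzAi, hzBi⟩ := hri
  obtain ⟨hzA, ρA, hρA, hballA0⟩ := ri_ball hzAi
  obtain ⟨hzB, ρB, hρB, hballB0⟩ := ri_ball hzBi
  set ρ : ℝ := min ρA ρB with hρdef
  have hρ : 0 < ρ := lt_min hρA hρB
  have hballA : ∀ w ∈ vectorSpan ℝ A, ‖w‖ ≤ ρ → z + w ∈ A :=
    fun w hw hn => hballA0 w hw (le_trans hn (min_le_left _ _))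
  have hballB : ∀ w ∈ vectorSpan ℝ B, ‖w‖ ≤ ρ → z + w ∈ B :=
    fun w hw hn => hballB0 w hw (le_trans hn (min_le_right _ _))
  set L : AffineSubspace ℝ X := affineSpan ℝ (A ∪ B) with hLdef
  set V : Submodule ℝ X := L.direction with hVdef
  set WA : Submodule ℝ X := vectorSpan ℝ A with hWAdef
  set WB : Submodule ℝ X := vectorSpan ℝ B with hWBdef
  have hAL : A ⊆ (L : Set X) := fun a ha => subset_affineSpan ℝ _ (Set.mem_union_left _ ha)
  have hBL : B ⊆ (L : Set X) := fun b hb => subset_affineSpan ℝ _ (Set.mem_union_right _ hb)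
  have hLcv : Convex ℝ (L : Set X) := L.convex
  have hVle : V ≤ WA ⊔ WB := by
    rw [hVdef, hLdef, direction_affineSpan,
      vectorSpan_eq_span_vsub_set_right ℝ (Set.mem_union_left _ hzA), Submodule.span_le]
    rintro _ ⟨c, hc, rfl⟩
    rcases hc with hcA | hcB
    · exact Submodule.mem_sup_left (vsub_mem_vectorSpan ℝ hcA hzA)
    · exact Submodule.mem_sup_right (vsub_mem_vectorSpan ℝ hcB hzB)
  have hPL_mem : ∀ x, PL x ∈ L := fun x => (projP_spec hLcv hPL x).1
  have hPL_orth : ∀ x : X, ∀ v ∈ V, ⟪x - PL x, v⟫ = 0 := by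
    intro x v hv
    have h1 := (projP_spec hLcv hPL x).2
    have hp : v + PL x ∈ L := by
      have h := AffineSubspace.vadd_mem_of_mem_direction hv (hPL_mem x)
      rwa [vadd_eq_add] at h
    have hm : -v + PL x ∈ L := by
      have h := AffineSubspace.vadd_mem_of_mem_direction (neg_mem hv) (hPL_mem x)
      rwa [vadd_eq_add] at h
    have h2 := h1 _ hp
    have h3 := h1 _ hm
    rw [show v + PL x - PL x = v by abel] at h2
    rw [show -v + PL x - PL x = -v by abel, inner_neg_right] at h3
    linarith
  set F : Set X := {w : X | PL w ∈ A ∧ PL w ∈ B} with hFdef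
  have hFfix : ∀ w ∈ F, T w = w := by
    intro w hw
    obtain ⟨hwA, hwB⟩ := hw
    have hPAw : PA w = PL w := by
      apply projP_eq hAcv hPA hwA
      intro c hc
      refine le_of_eq (hPL_orth w _ ?_)
      have h := AffineSubspace.vsub_mem_direction (hAL hc) (hPL_mem w)
      rwa [vsub_eq_sub] at h
    have hPBw : PB ((2:ℝ) • PL w - w) = PL w := by
      apply projP_eq hBcv hPB hwB
      intro c hc
      have h1 : (2:ℝ) • PL w - w - PL w = -(w - PL w) := by module
      rw [h1, inner_neg_left]
      have h2 : c - PL w ∈ V := by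
        have h := AffineSubspace.vsub_mem_direction (hBL hc) (hPL_mem w)
        rwa [vsub_eq_sub] at h
      rw [hPL_orth w _ h2]; norm_num
    rw [hT w, hPAw, hPBw]; abel
  have hzL : z ∈ L := hAL hzA
  have hPLz : PL z = z := projP_eq hLcv hPL hzL (fun c hc => by simp)
  have hzF : z ∈ F := by rw [hFdef, Set.mem_setOf_eq, hPLz]; exact ⟨hzA, hzB⟩
  have hTz : T z = z := hFfix z hzF
  have hTnonexp := T_nonexp hAcv hBcv hPA hPB hT
  set M : ℝ := ‖x₀ - z‖ with hMdef
  have hM0 : 0 ≤ M := norm_nonneg _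
  have hM : ∀ n, ‖xs n - z‖ ≤ M := by
    intro n; induction n with
    | zero => rw [hx0]
    | succ n ih =>
      rw [hiter n]
      calc ‖T (xs n) - z‖ = ‖T (xs n) - T z‖ := by rw [hTz]
        _ ≤ ‖xs n - z‖ := hTnonexp _ _
        _ ≤ M := ih
  have h2M : ∀ n, ‖xs n - T (xs n)‖ ≤ 2 * M := by
    intro n
    calc ‖xs n - T (xs n)‖ = ‖(xs n - z) - (T (xs n) - T z)‖ := by rw [hTz]; congr 1; abel
      _ ≤ ‖xs n - z‖ + ‖T (xs n) - T z‖ := norm_sub_le _ _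
      _ ≤ M + M := add_le_add (hM n) (le_trans (hTnonexp _ _) (hM n))
      _ = 2 * M := by ring
  obtain ⟨cc, hcc1, hEB⟩ := error_bound' A B hAcv hBcv PA PB PL T hPA hPB hPL hT z ρ M
    hzA hzB hρ hM0 hballA hballB
  have hcc0 : (0:ℝ) < cc := lt_of_lt_of_le one_pos hcc1
  set D : ℕ → ℝ := fun n => Metric.infDist (xs n) F with hDdef
  have hD0 : ∀ n, 0 ≤ D n := fun n => Metric.infDist_nonneg
  have hFne : F.Nonempty := ⟨z, hzF⟩
  have hDEB : ∀ n, D n ≤ cc * ‖xs n - xs (n + 1)‖ := by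
    intro n
    rw [hiter n]
    exact hEB (xs n) (hM n) (h2M n)
  have hkey2 : ∀ n, D (n + 1) ^ 2 + ‖xs n - xs (n + 1)‖ ^ 2 ≤ D n ^ 2 := by
    intro n
    have hall : ∀ η : ℝ, 0 < η → D (n+1) ^ 2 + ‖xs n - xs (n+1)‖ ^ 2 ≤ (D n + η) ^ 2 := by
      intro η hη
      obtain ⟨f, hfF, hfd⟩ := (Metric.infDist_lt_iff hFne).1
        (lt_add_of_pos_right (D n) hη)
      have hfirm := T_firm hAcv hBcv hPA hPB hT (xs n) f
      rw [hFfix f hfF, sub_self, sub_zero, ← hiter n] at hfirm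
      have e1 : D (n+1) ≤ ‖xs (n+1) - f‖ := by
        rw [← dist_eq_norm]; exact Metric.infDist_le_dist_of_mem hfF
      have e2 : ‖xs n - f‖ ≤ D n + η := by
        rw [← dist_eq_norm]; exact le_of_lt hfd
      nlinarith [norm_nonneg (xs (n+1) - f), norm_nonneg (xs n - f), hD0 (n+1), hD0 n]
    by_contra hcon
    push_neg at hcon
    set δ : ℝ := (D (n + 1) ^ 2 + ‖xs n - xs (n + 1)‖ ^ 2) - D n ^ 2 with hδdef
    have hδ0 : 0 < δ := by rw [hδdef]; linarith
    set η : ℝ := min 1 (δ / (2 * D n + 2)) with hηdef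
    have hden : (0:ℝ) < 2 * D n + 2 := by linarith [hD0 n]
    have hη0 : 0 < η := lt_min one_pos (div_pos hδ0 hden)
    have hη1 : η ≤ 1 := min_le_left _ _
    have hη2 : η * (2 * D n + 2) ≤ δ := by
      have h := min_le_right 1 (δ / (2 * D n + 2))
      calc η * (2 * D n + 2) ≤ (δ / (2 * D n + 2)) * (2 * D n + 2) :=
            mul_le_mul_of_nonneg_right h (le_of_lt hden)
        _ = δ := div_mul_cancel₀ _ (ne_of_gt hden)
    have h := hall η hη0
    nlinarith [hD0 n]
  have hεD : ∀ n, ‖xs n - xs (n + 1)‖ ≤ D n := by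
    intro n
    have h := hkey2 n
    nlinarith [hD0 n, norm_nonneg (xs n - xs (n+1)), sq_nonneg (D (n+1))]
  set κ : ℝ := Real.sqrt (1 - 1 / cc ^ 2) with hκdef
  have hccsq : 1 / cc ^ 2 ≤ 1 := by
    rw [div_le_one (by positivity)]; nlinarith
  have h1cc : 0 < 1 / cc ^ 2 := by positivity
  have hκ0 : 0 ≤ κ := Real.sqrt_nonneg _
  have hκsq : κ ^ 2 = 1 - 1 / cc ^ 2 := Real.sq_sqrt (by linarith)
  have hκ1 : κ < 1 := by nlinarith
  have hcontract : ∀ n, D (n + 1) ≤ κ * D n := by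
    intro n
    have h1 := hDEB n
    have h2 := hkey2 n
    have h4 : D n ^ 2 / cc ^ 2 ≤ ‖xs n - xs (n + 1)‖ ^ 2 := by
      rw [div_le_iff₀ (by positivity)]
      nlinarith [hD0 n, norm_nonneg (xs n - xs (n+1))]
    have h5 : D (n+1) ^ 2 ≤ (κ * D n) ^ 2 := by
      have h6 : (κ * D n) ^ 2 = (1 - 1 / cc ^ 2) * D n ^ 2 := by rw [mul_pow, hκsq]
      have h7 : (1 - 1 / cc ^ 2) * D n ^ 2 = D n ^ 2 - D n ^ 2 / cc ^ 2 := by ring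
      rw [h6, h7]; linarith
    nlinarith [hD0 (n+1), mul_nonneg hκ0 (hD0 n)]
  have hgeom : ∀ n, D n ≤ D 0 * κ ^ n := by
    intro n; induction n with
    | zero => simp
    | succ n ih =>
      calc D (n+1) ≤ κ * D n := hcontract n
        _ ≤ κ * (D 0 * κ ^ n) := mul_le_mul_of_nonneg_left ih hκ0
        _ = D 0 * κ ^ (n+1) := by ring
  have hstep : ∀ n, dist (xs n) (xs (n + 1)) ≤ D 0 * κ ^ n := by
    intro n; rw [dist_eq_norm]; exact le_trans (hεD n) (hgeom n)
  have hcauchy : CauchySeq xs := cauchySeq_of_le_geometric κ (D 0) hκ1 hstep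
  obtain ⟨xbar, hxbar⟩ := cauchySeq_tendsto_of_complete hcauchy
  have hrate := dist_le_of_le_geometric_of_tendsto κ (D 0) hκ1 hstep hxbar
  have hTcont : Continuous T := by
    apply LipschitzWith.continuous (K := 1)
    apply LipschitzWith.of_dist_le_mul
    intro x y
    simpa [dist_eq_norm] using hTnonexp x y
  have hTfix : T xbar = xbar := by
    have h1 : Tendsto (fun n => xs (n + 1)) atTop (𝓝 xbar) :=
      hxbar.comp (tendsto_add_atTop_nat 1)
    have h2 : Tendsto (fun n => T (xs n)) atTop (𝓝 (T xbar)) :=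
      (hTcont.tendsto xbar).comp hxbar
    have h3 : (fun n => T (xs n)) = fun n => xs (n + 1) := by
      funext n; rw [hiter n]
    rw [h3] at h2
    exact tendsto_nhds_unique h2 h1
  -- structure of the limit
  set abar : X := PA xbar with habar
  have hbfix : PB ((2:ℝ) • abar - xbar) = abar := by
    have h2 := hTfix
    rw [hT xbar, ← habar] at h2
    have h3 : PB ((2:ℝ) • abar - xbar) - abar = 0 := by
      rw [show PB ((2:ℝ) • abar - xbar) - abar
          = (PB ((2:ℝ) • abar - xbar) + xbar - abar) - xbar by abel, h2, sub_self]
    exact sub_eq_zero.1 h3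
  have habarA : abar ∈ A := (projP_spec hAcv hPA xbar).1
  have habarB : abar ∈ B := by
    rw [← hbfix]; exact (projP_spec hBcv hPB _).1
  have huA : ∀ c ∈ A, ⟪xbar - abar, c - abar⟫ ≤ 0 := (projP_spec hAcv hPA xbar).2
  have hbineq : ∀ c ∈ B, ⟪abar - xbar, c - abar⟫ ≤ 0 := by
    intro c hc
    have h1 := (projP_spec hBcv hPB ((2:ℝ) • abar - xbar)).2 c hc
    rw [hbfix] at h1
    rw [show (2:ℝ) • abar - xbar - abar = abar - xbar by module] at h1
    exact h1
  have hz0 : ⟪xbar - abar, z - abar⟫ = 0 := by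
    have h1 := huA z hzA
    have h2 := hbineq z hzB
    rw [show abar - xbar = -(xbar - abar) by abel, inner_neg_left] at h2
    linarith
  have hscale : ∀ (W : Submodule ℝ X), (∀ w ∈ W, ‖w‖ ≤ ρ → ⟪xbar - abar, w⟫ = 0) →
      ∀ w ∈ W, ⟪xbar - abar, w⟫ = 0 := by
    intro W hsmall w hw
    rcases eq_or_ne w 0 with h0 | h0
    · rw [h0, inner_zero_right]
    · have hwn : 0 < ‖w‖ := norm_pos_iff.2 h0
      have h1 := hsmall ((ρ / ‖w‖) • w) (Submodule.smul_mem _ _ hw)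
        (by rw [norm_smul, Real.norm_eq_abs, abs_of_pos (div_pos hρ hwn),
              div_mul_cancel₀ _ (ne_of_gt hwn)])
      rw [real_inner_smul_right] at h1
      rcases mul_eq_zero.1 h1 with h2 | h2
      · exact absurd h2 (ne_of_gt (div_pos hρ hwn))
      · exact h2
  have huWA : ∀ w ∈ WA, ⟪xbar - abar, w⟫ = 0 := by
    apply hscale
    intro w hw hwρ
    have h1 := huA (z + w) (hballA w hw hwρ)
    have h2 := huA (z + (-w)) (hballA (-w) (neg_mem hw) (by rwa [norm_neg]))
    rw [show z + w - abar = (z - abar) + w by abel, inner_add_right, hz0] at h1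
    rw [show z + (-w) - abar = (z - abar) + (-w) by abel, inner_add_right, hz0,
      inner_neg_right] at h2
    linarith
  have huWB : ∀ w ∈ WB, ⟪xbar - abar, w⟫ = 0 := by
    apply hscale
    intro w hw hwρ
    have h1 := hbineq (z + w) (hballB w hw hwρ)
    have h2 := hbineq (z + (-w)) (hballB (-w) (neg_mem hw) (by rwa [norm_neg]))
    have hz0' : ⟪abar - xbar, z - abar⟫ = 0 := by
      rw [show abar - xbar = -(xbar - abar) by abel, inner_neg_left, hz0]; ring
    rw [show z + w - abar = (z - abar) + w by abel, inner_add_right, hz0'] at h1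
    rw [show z + (-w) - abar = (z - abar) + (-w) by abel, inner_add_right, hz0',
      inner_neg_right] at h2
    have h3 : ⟪abar - xbar, w⟫ = -⟪xbar - abar, w⟫ := by
      rw [show abar - xbar = -(xbar - abar) by abel, inner_neg_left]
    linarith [h1, h2, h3.symm.le, h3.le]
  have huV : ∀ v ∈ V, ⟪xbar - abar, v⟫ = 0 := by
    intro v hv
    obtain ⟨wa, hwa, wb, hwb, rfl⟩ := Submodule.mem_sup.1 (hVle hv)
    rw [inner_add_right, huWA wa hwa, huWB wb hwb, add_zero]
  have hPBxbar : PB xbar = abar := by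
    apply projP_eq hBcv hPB habarB
    intro c hc
    refine le_of_eq (huV _ ?_)
    have h := AffineSubspace.vsub_mem_direction (hBL hc) (hAL habarA)
    rwa [vsub_eq_sub] at h
  -- shadow identity
  have hxsV : ∀ n, xs n - x₀ ∈ V := by
    intro n; induction n with
    | zero => rw [hx0, sub_self]; exact zero_mem _
    | succ n ih =>
      have h1 : xs (n+1) - x₀ = (xs (n+1) - xs n) + (xs n - x₀) := by abel
      rw [h1]
      apply add_mem _ ih
      have h2 : xs (n+1) - xs n = PB ((2:ℝ) • PA (xs n) - xs n) - PA (xs n) := by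
        rw [hiter n, hT (xs n)]; abel
      rw [h2]
      have h := AffineSubspace.vsub_mem_direction
        (hBL ((projP_spec hBcv hPB ((2:ℝ) • PA (xs n) - xs n)).1))
        (hAL ((projP_spec hAcv hPA (xs n)).1))
      rwa [vsub_eq_sub] at h
  have hlimV : xbar - x₀ ∈ V := by
    have hclosed : IsClosed (V : Set X) := Submodule.closed_of_finiteDimensional V
    have htend : Tendsto (fun n => xs n - x₀) atTop (𝓝 (xbar - x₀)) :=
      hxbar.sub tendsto_const_nhds
    exact hclosed.mem_of_tendsto htend (Filter.Eventually.of_forall hxsV)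
  have hPLx0 : PL x₀ ∈ L := hPL_mem x₀
  set w : X := (xbar - abar) - (x₀ - PL x₀) with hwdef
  have hwV : w ∈ V := by
    have h1 : w = (xbar - x₀) + (PL x₀ - abar) := by rw [hwdef]; abel
    rw [h1]
    apply add_mem hlimV
    have h := AffineSubspace.vsub_mem_direction hPLx0 (hAL habarA)
    rwa [vsub_eq_sub] at h
  have hw0 : w = 0 := by
    have h1 : ⟪w, w⟫ = 0 := by
      rw [hwdef, inner_sub_left, huV w hwV, hPL_orth x₀ w hwV, sub_zero]
    exact inner_self_eq_zero.1 h1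
  have hshadow : abar = xbar - (x₀ - PL x₀) := by
    have h1 : xbar - abar = x₀ - PL x₀ := by
      have h2 := sub_eq_zero.1 hw0
      exact h2
    rw [← h1]; abel
  refine ⟨xbar, hTfix, ⟨D 0 / (1 - κ), div_nonneg (hD0 0) (by linarith), κ, ⟨hκ0, hκ1⟩,
    fun n => ?_⟩, hxbar, by rw [hPBxbar], hshadow, ⟨habarA, habarB⟩⟩
  rw [← dist_eq_norm]
  calc dist (xs n) xbar ≤ D 0 * κ ^ n / (1 - κ) := hrate n
    _ = D 0 / (1 - κ) * κ ^ n := by ring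
end

section
/- Let A = ℝ × ℝ₊ and B = {(x₁,x₂) ∈ ℝ² : x₂ ≤ −x₁²}, and let T be the Douglas–Rachford operator for A and B. Then the point x₀ = (0,−1) is a fixed point of T, yet P_A(x₀) = (0,0) ≠ P_B(x₀) = (0,−1); in particular, for a fixed point x̄ of T the projections P_A x̄ and P_B x̄ need not coincide. -/
open Metric Filter
open scoped Topology

variable {X : Type*} [NormedAddCommGroup X] [InnerProductSpace ℝ X] [FiniteDimensional ℝ X]

private lemma nsq2 (x : EuclideanSpace ℝ (Fin 2)) : ‖x‖ ^ 2 = (x 0)^2 + (x 1)^2 := by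
  rw [EuclideanSpace.norm_eq, Real.sq_sqrt (by positivity)]
  simp [Fin.sum_univ_two, sq_abs]

private lemma norm_le_of_sq {E : Type*} [NormedAddCommGroup E] {u v : E}
    (h : ‖u‖ ^ 2 ≤ ‖v‖ ^ 2) : ‖u‖ ≤ ‖v‖ := by
  nlinarith [norm_nonneg u, norm_nonneg v]

theorem DR_fixed_point_shadows_may_differ
    (A B : Set (EuclideanSpace ℝ (Fin 2)))
    (hA : A = {p | 0 ≤ p 1}) (hB : B = {p | p 1 ≤ -(p 0) ^ 2})
    (x₀ o : EuclideanSpace ℝ (Fin 2))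
    (hx₀ : x₀ 0 = 0 ∧ x₀ 1 = -1) (ho : o 0 = 0 ∧ o 1 = 0) :
    x₀ ∈ DRop A B x₀ ∧ projSet A x₀ = {o} ∧ projSet B x₀ = {x₀} ∧ o ≠ x₀ := by
  obtain ⟨hx0, hx1⟩ := hx₀
  obtain ⟨ho0, ho1⟩ := ho
  have hoA : o ∈ A := by rw [hA]; simp [ho1]
  have hx₀B : x₀ ∈ B := by rw [hB]; simp [hx0, hx1]
  have hoB : o ∈ B := by rw [hB]; simp [ho0, ho1]
  have hone : o ≠ x₀ := by
    intro h
    have : o 1 = x₀ 1 := by rw [h]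
    rw [ho1, hx1] at this; norm_num at this
  have projA : projSet A x₀ = {o} := by
    ext a
    constructor
    · rintro ⟨haA, hmin⟩
      have haA' : 0 ≤ a 1 := by rw [hA] at haA; exact haA
      have hle : ‖x₀ - a‖ ≤ ‖x₀ - o‖ := hmin o hoA
      have hsq : ‖x₀ - a‖ ^ 2 ≤ ‖x₀ - o‖ ^ 2 := by
        have := norm_nonneg (x₀ - a); nlinarith [norm_nonneg (x₀ - o)]
      rw [nsq2, nsq2] at hsq
      simp only [PiLp.sub_apply, hx0, hx1, ho0, ho1] at hsq
      have ha0 : a 0 = 0 := by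
        have h0 : (a 0) ^ 2 ≤ 0 := by nlinarith
        nlinarith [sq_nonneg (a 0)]
      have ha1 : a 1 = 0 := by
        have h1 : a 1 ≤ 0 := by nlinarith [sq_nonneg (a 0)]
        linarith
      have : a = o := by
        ext i; fin_cases i
        · simpa using ha0.trans ho0.symm
        · simpa using ha1.trans ho1.symm
      simpa using this
    · intro h
      simp only [Set.mem_singleton_iff] at h
      subst h
      refine ⟨hoA, fun c hc => ?_⟩
      have hc' : 0 ≤ c 1 := by rw [hA] at hc; exact hc
      apply norm_le_of_sq
      rw [nsq2, nsq2]
      simp only [PiLp.sub_apply, hx0, hx1, ho0, ho1]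
      nlinarith [sq_nonneg (c 0)]
  have projB : projSet B x₀ = {x₀} := by
    ext b
    constructor
    · rintro ⟨hbB, hmin⟩
      have := hmin x₀ hx₀B
      simp only [sub_self, norm_zero] at this
      have h0 : ‖x₀ - b‖ = 0 := le_antisymm this (norm_nonneg _)
      have : x₀ - b = 0 := norm_eq_zero.mp h0
      have : b = x₀ := by
        have := sub_eq_zero.mp this; exact this.symm
      simpa using this
    · intro h
      simp only [Set.mem_singleton_iff] at h
      subst h
      exact ⟨hx₀B, fun c _ => by simp⟩
  refine ⟨?_, projA, projB, hone⟩
  refine ⟨o, by rw [projA]; rfl, o, ?_, by abel⟩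
  refine ⟨hoB, fun c hc => ?_⟩
  have hc' : c 1 ≤ -(c 0) ^ 2 := by rw [hB] at hc; exact hc
  apply norm_le_of_sq
  rw [nsq2, nsq2]
  simp only [PiLp.sub_apply, PiLp.smul_apply, smul_eq_mul, hx0, hx1, ho0, ho1]
  nlinarith [sq_nonneg (c 0), sq_nonneg (c 0 ^ 2)]
end

section
/- Let A and B be two distinct lines through the origin in ℝ³ spanning a 2-dimensional plane L = aff(A ∪ B), intersecting only at w = 0. Then {A,B} is affine-hull regular at w (N_A^L(w) ∩ (−N_B^L(w)) = {0}, where N_C^L(w) := N_C(w) ∩ (L − w)), but {A,B} is not strongly regular at w (N_A(w) ∩ (−N_B(w)) ≠ {0}). -/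
open Metric Filter
open scoped Topology

variable {X : Type*} [NormedAddCommGroup X] [InnerProductSpace ℝ X] [FiniteDimensional ℝ X]

set_option linter.unusedSectionVars false
set_option linter.unusedVariables false
set_option linter.unnecessarySimpa false

lemma mem_projSet_iff_s19 (K : Submodule ℝ X) (z x : X) :
    x ∈ projSet (K : Set X) z ↔ x ∈ K ∧ z - x ∈ Kᗮ := by
  constructor
  · rintro ⟨hxK, hmin⟩
    refine ⟨hxK, ?_⟩
    rw [Submodule.mem_orthogonal]
    intro w hw
    rw [real_inner_comm]
    by_cases hw0 : w = 0
    · simp [hw0]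
    have key : ∀ t : ℝ, 0 ≤ -2 * t * (inner ℝ (z - x) w : ℝ) + t ^ 2 * ‖w‖ ^ 2 := by
      intro t
      have hc : x + t • w ∈ (K : Set X) := K.add_mem hxK (K.smul_mem t hw)
      have h1 := hmin _ hc
      have h2 : ‖z - (x + t • w)‖ ^ 2 = ‖z - x‖ ^ 2 - 2 * (inner ℝ (z - x) (t • w) : ℝ) + ‖t • w‖ ^ 2 := by
        rw [show z - (x + t • w) = (z - x) - t • w by abel, norm_sub_sq_real]
      have h3 : ‖z - x‖ ^ 2 ≤ ‖z - (x + t • w)‖ ^ 2 := by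
        have := norm_nonneg (z - x); nlinarith
      rw [real_inner_smul_right] at h2
      rw [norm_smul] at h2
      simp only [Real.norm_eq_abs] at h2
      nlinarith [sq_abs t]
    set s := (inner ℝ (z - x) w : ℝ) with hs
    have hwn : ‖w‖ ≠ 0 := norm_ne_zero_iff.mpr hw0
    have hwpos : (0:ℝ) < ‖w‖ ^ 2 := by positivity
    have := key (s / ‖w‖ ^ 2)
    have h4 : 0 ≤ -s ^ 2 / ‖w‖ ^ 2 := by
      have : -2 * (s / ‖w‖ ^ 2) * s + (s / ‖w‖ ^ 2) ^ 2 * ‖w‖ ^ 2 = -s ^ 2 / ‖w‖ ^ 2 := by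
        field_simp; ring
      linarith [key (s / ‖w‖ ^ 2), this ▸ key (s / ‖w‖ ^ 2)]
    have h6 : 0 ≤ -s ^ 2 := by
      have h7 := mul_nonneg h4 hwpos.le
      rwa [div_mul_cancel₀ _ (ne_of_gt hwpos)] at h7
    nlinarith [sq_nonneg s]
  · rintro ⟨hxK, horth⟩
    refine ⟨hxK, fun c hc => ?_⟩
    have hperp : (inner ℝ (z - x) (x - c) : ℝ) = 0 := by
      rw [Submodule.mem_orthogonal] at horth
      rw [real_inner_comm]; exact horth _ (K.sub_mem hxK hc)
    have : ‖z - c‖ ^ 2 = ‖z - x‖ ^ 2 + ‖x - c‖ ^ 2 := by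
      rw [show z - c = (z - x) + (x - c) by abel, norm_add_sq_real, hperp]; ring
    nlinarith [norm_nonneg (z - c), norm_nonneg (z - x), sq_nonneg (‖x - c‖)]

lemma proxNormalCone_subspace (K : Submodule ℝ X) {x : X} (hx : x ∈ K) :
    proxNormalCone (K : Set X) x = (Kᗮ : Set X) := by
  ext u
  constructor
  · rintro ⟨t, ht, z, hz, rfl⟩
    have := (mem_projSet_iff_s19 K z x).mp hz
    exact Kᗮ.smul_mem t this.2
  · intro hu
    exact ⟨1, zero_le_one, x + u, (mem_projSet_iff_s19 K (x + u) x).mpr ⟨hx, by simpa using hu⟩,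
      by simp⟩

lemma limNormalCone_subspace (K : Submodule ℝ X) :
    limNormalCone (K : Set X) 0 = (Kᗮ : Set X) := by
  ext u
  constructor
  · rintro ⟨xs, us, hxs, hus, _, husl⟩
    have hmem : ∀ n, us n ∈ (Kᗮ : Set X) := fun n => by
      rw [← proxNormalCone_subspace K (hxs n)]; exact hus n
    exact (Submodule.closed_of_finiteDimensional Kᗮ).mem_of_tendsto husl
      (Filter.Eventually.of_forall hmem)
  · intro hu
    exact ⟨fun _ => 0, fun _ => u, fun n => K.zero_mem, fun n => by
      rw [proxNormalCone_subspace K K.zero_mem]; exact hu, tendsto_const_nhds, tendsto_const_nhds⟩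

theorem two_lines_affine_hull_regular_not_strongly_regular
    (a b : EuclideanSpace ℝ (Fin 3)) (hab : LinearIndependent ℝ ![a, b])
    (A B L : Set (EuclideanSpace ℝ (Fin 3)))
    (hA : A = (Submodule.span ℝ {a} : Submodule ℝ (EuclideanSpace ℝ (Fin 3))))
    (hB : B = (Submodule.span ℝ {b} : Submodule ℝ (EuclideanSpace ℝ (Fin 3))))
    (hL : L = ((affineSpan ℝ (A ∪ B) : AffineSubspace ℝ (EuclideanSpace ℝ (Fin 3))) : Set _))
    (hAB : A ∩ B = {0}) :
    (limNormalCone A 0 ∩ (fun l => l - 0) '' L) ∩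
        -(limNormalCone B 0 ∩ (fun l => l - 0) '' L) = {0} ∧
      limNormalCone A 0 ∩ -limNormalCone B 0 ≠ {0} := by
  set K : Submodule ℝ (EuclideanSpace ℝ (Fin 3)) := Submodule.span ℝ {a, b} with hK
  have hNA : limNormalCone A 0 = ((Submodule.span ℝ {a})ᗮ : Set (EuclideanSpace ℝ (Fin 3))) := by
    rw [hA]; exact limNormalCone_subspace _
  have hNB : limNormalCone B 0 = ((Submodule.span ℝ {b})ᗮ : Set (EuclideanSpace ℝ (Fin 3))) := by
    rw [hB]; exact limNormalCone_subspace _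
  have haK : Submodule.span ℝ {a} ≤ K := Submodule.span_mono (by simp)
  have hbK : Submodule.span ℝ {b} ≤ K := Submodule.span_mono (by simp [Set.singleton_subset_iff])
  have himg : (fun l : EuclideanSpace ℝ (Fin 3) => l - 0) '' L = L := by simp
  have hLK : L ⊆ (K : Set (EuclideanSpace ℝ (Fin 3))) := by
    rw [hL]
    have h : affineSpan ℝ (A ∪ B) ≤ K.toAffineSubspace := by
      rw [affineSpan_le]
      intro x hx
      rcases hx with hx | hx
      · rw [hA] at hx; exact haK hx
      · rw [hB] at hx; exact hbK hx
    exact h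
  have h0L : (0 : EuclideanSpace ℝ (Fin 3)) ∈ L := by
    rw [hL]
    exact subset_affineSpan ℝ _ (Or.inl (by rw [hA]; exact Submodule.zero_mem _))
  have hKorth : ∀ x : EuclideanSpace ℝ (Fin 3),
      x ∈ (Submodule.span ℝ {a})ᗮ → x ∈ (Submodule.span ℝ {b})ᗮ → x ∈ Kᗮ := by
    intro x hxa hxb
    rw [Submodule.mem_orthogonal]
    intro y hy
    rw [hK, Submodule.mem_span_pair] at hy
    obtain ⟨r, s, rfl⟩ := hy
    have h1 : (inner ℝ a x : ℝ) = 0 :=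
      (Submodule.mem_orthogonal _ x).mp hxa a (Submodule.mem_span_singleton_self a)
    have h2 : (inner ℝ b x : ℝ) = 0 :=
      (Submodule.mem_orthogonal _ x).mp hxb b (Submodule.mem_span_singleton_self b)
    rw [inner_add_left, real_inner_smul_left, real_inner_smul_left, h1, h2]; ring
  constructor
  · ext x
    simp only [Set.mem_inter_iff, Set.mem_neg, Set.mem_singleton_iff, himg, hNA, hNB]
    constructor
    · rintro ⟨⟨hxa, hxL⟩, hxb, hxL'⟩
      have hxb' : x ∈ (Submodule.span ℝ {b})ᗮ := by
        have h := Submodule.neg_mem (Submodule.span ℝ {b})ᗮ hxb; simpa using h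
      exact Submodule.disjoint_def.mp K.orthogonal_disjoint x (hLK hxL) (hKorth x hxa hxb')
    · rintro rfl
      refine ⟨⟨Submodule.zero_mem _, h0L⟩, ?_, by simpa using h0L⟩
      simpa using Submodule.zero_mem (Submodule.span ℝ {b})ᗮ
  · have hKne : K ≠ ⊤ := by
      intro h
      have h1 : Module.finrank ℝ K = 2 := by
        have h2 := finrank_span_eq_card hab
        have h3 : Set.range ![a, b] = {a, b} := by
          ext y; simp [Matrix.range_cons, Matrix.range_empty, or_comm]
        rw [h3] at h2
        simpa using h2
      rw [h] at h1
      have h4 : Module.finrank ℝ (⊤ : Submodule ℝ (EuclideanSpace ℝ (Fin 3))) = 3 := by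
        simp [finrank_euclideanSpace]
      omega
    have hbot : Kᗮ ≠ ⊥ := fun h => hKne (Submodule.orthogonal_eq_bot_iff.mp h)
    obtain ⟨u, huK, hu0⟩ := (Submodule.ne_bot_iff Kᗮ).mp hbot
    intro hcontra
    have hu : u ∈ limNormalCone A 0 ∩ -limNormalCone B 0 := by
      constructor
      · rw [hNA]; exact Submodule.orthogonal_le haK huK
      · rw [Set.mem_neg, hNB]
        exact Submodule.neg_mem _ (Submodule.orthogonal_le hbK huK)
    rw [hcontra] at hu
    exact hu0 hu
end
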